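/- arXiv:2208.05642 — 4 statements merged into one kernel-verified Lean document; each statement's English description precedes it below -/
import Mathlib

section
/- Let ρ ≥ 1 and define r₁ = log ρ + log(log(ρ + (e − 1))). Then k(r₁) ≥ 0, where k(r) = (1 + ρ)r − (e^r − 1) − ρ(1 − e^{−r}). Equivalently, (ρ+1)(log ρ + log log(ρ + e − 1)) − ρ(log(ρ + e − 1) + 1) + 1/log(ρ + e − 1) + 1 ≥ 0. -/
open Real


lemma my_le_of_deriv_nonneg {a : ℝ} (f f' : ℝ → ℝ)
    (hd : ∀ x, a ≤ x → HasDerivAt f (f' x) x)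
    (h0 : ∀ x, a ≤ x → 0 ≤ f' x) {x : ℝ} (hx : a ≤ x) : f a ≤ f x := by
  have mono : MonotoneOn f (Set.Ici a) := by
    apply monotoneOn_of_deriv_nonneg (convex_Ici a)
    · exact fun y hy => (hd y hy).continuousAt.continuousWithinAt
    · intro y hy
      rw [interior_Ici] at hy
      exact (hd y hy.le).differentiableAt.differentiableWithinAt
    · intro y hy
      rw [interior_Ici] at hy
      rw [(hd y hy.le).deriv]
      exact h0 y hy.le
  exact mono Set.self_mem_Ici hx hx

lemma my_log_cubic {t : ℝ} (ht : 0 ≤ t) : Real.log (1 + t) ≤ t - t^2/2 + t^3/3 := by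
  have key := my_le_of_deriv_nonneg (a := 0)
    (fun y => y - y^2/2 + y^3/3 - Real.log (1+y))
    (fun y => 1 - (2*y^((2:ℕ)-1))/2 + (3*y^((3:ℕ)-1))/3 - (1+y)⁻¹)
    (fun y hy => by
      have h1 : (0:ℝ) < 1 + y := by linarith
      have hlog : HasDerivAt (fun z : ℝ => Real.log (1+z)) ((1+y)⁻¹) y := by
        exact ((Real.hasDerivAt_log (ne_of_gt h1)).comp y
          ((hasDerivAt_id y).const_add 1)).congr_deriv (by simp)
      exact (((hasDerivAt_id y).sub ((hasDerivAt_pow 2 y).div_const 2)).add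
          ((hasDerivAt_pow 3 y).div_const 3)).sub hlog)
    (fun y hy => by
      have h1 : (0:ℝ) < 1 + y := by linarith
      have h2 : (1+y)⁻¹ * (1+y) = 1 := inv_mul_cancel₀ (ne_of_gt h1)
      have h3 : (1+y)⁻¹ ≤ 1 := by
        rw [inv_le_one_iff₀]; right; linarith
      nlinarith [sq_nonneg y, mul_nonneg (mul_nonneg hy hy) hy]) ht
  simp only [pow_succ, pow_zero] at key
  norm_num at key
  linarith [key]


noncomputable def myc : ℝ := Real.exp 1 - 1

noncomputable def Fh (x : ℝ) : ℝ :=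
  (1 + (Real.exp x - myc)) * (Real.log (Real.exp x - myc) + Real.log x)
    + 1 + 1/x - (Real.exp x - myc) * (x+1)

noncomputable def F1h (x : ℝ) : ℝ :=
  Real.exp x * (Real.log (Real.exp x - myc) + Real.log x)
    + (1 + (Real.exp x - myc)) * (Real.exp x / (Real.exp x - myc) + 1/x)
    - 1/x^2 - Real.exp x * (x+1) - (Real.exp x - myc)

noncomputable def F2h (x : ℝ) : ℝ :=
  Real.exp x * (Real.log (Real.exp x - myc) + Real.log x)
    + 2 * Real.exp x * (Real.exp x / (Real.exp x - myc) + 1/x)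
    + (1 + (Real.exp x - myc)) * (-(myc * Real.exp x) / (Real.exp x - myc)^2 - 1/x^2)
    + 2/x^3 - Real.exp x * (x+2) - Real.exp x

lemma exp_one_sub_myc : Real.exp 1 - myc = 1 := by unfold myc; ring

lemma Fh_one : Fh 1 = 0 := by
  unfold Fh
  rw [exp_one_sub_myc]
  simp

lemma F1h_one : F1h 1 = 0 := by
  unfold F1h
  rw [exp_one_sub_myc]
  simp
  ring

lemma F2h_one : F2h 1 = 0 := by
  unfold F2h
  rw [exp_one_sub_myc]
  have h : myc = Real.exp 1 - 1 := rfl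
  simp [h]
  ring

noncomputable def F3h (x : ℝ) : ℝ :=
  Real.exp x * (Real.log (Real.exp x - myc) + Real.log x)
    + 3 * Real.exp x * (Real.exp x / (Real.exp x - myc) + 1/x)
    - 3 * Real.exp x * (myc * Real.exp x / (Real.exp x - myc)^2 + 1/x^2)
    + (1 + (Real.exp x - myc)) *
        (myc * Real.exp x * ((Real.exp x - myc) + 2*myc) / (Real.exp x - myc)^3 + 2/x^3)
    - 6/x^4 - Real.exp x * (x+4)


lemma hasDeriv_Fh {x : ℝ} (hx0 : x ≠ 0) (hp : Real.exp x - myc ≠ 0) :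
    HasDerivAt Fh (F1h x) x := by
  have hE : HasDerivAt (fun y : ℝ => Real.exp y - myc) (Real.exp x) x := by
    simpa using (Real.hasDerivAt_exp x).sub_const myc
  have hlogp : HasDerivAt (fun y : ℝ => Real.log (Real.exp y - myc))
      ((Real.exp x - myc)⁻¹ * Real.exp x) x :=
    by have := (Real.hasDerivAt_log hp).comp x hE; exact this
  have hlogx : HasDerivAt Real.log x⁻¹ x := Real.hasDerivAt_log hx0
  have hinv : HasDerivAt (fun y : ℝ => 1/y) (-(x^2)⁻¹) x := by
    simpa [one_div] using hasDerivAt_inv hx0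
  have h1 : HasDerivAt (fun y : ℝ =>
      (1 + (Real.exp y - myc)) * (Real.log (Real.exp y - myc) + Real.log y))
      (Real.exp x * (Real.log (Real.exp x - myc) + Real.log x)
        + (1 + (Real.exp x - myc)) * ((Real.exp x - myc)⁻¹ * Real.exp x + x⁻¹)) x := by
    have := (hE.const_add 1).mul (hlogp.add hlogx)
    exact this
  have h2 : HasDerivAt (fun y : ℝ => (Real.exp y - myc) * (y+1))
      (Real.exp x * (x+1) + (Real.exp x - myc) * 1) x :=
    hE.mul ((hasDerivAt_id x).add_const 1)
  have H := ((h1.add_const 1).add hinv).sub h2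
  refine H.congr_deriv ?_
  unfold F1h
  field_simp
  ring

lemma hasDeriv_F1h {x : ℝ} (hx0 : x ≠ 0) (hp : Real.exp x - myc ≠ 0) :
    HasDerivAt F1h (F2h x) x := by
  have hexp := Real.hasDerivAt_exp x
  have hE : HasDerivAt (fun y : ℝ => Real.exp y - myc) (Real.exp x) x := by
    simpa using hexp.sub_const myc
  have hlogp : HasDerivAt (fun y : ℝ => Real.log (Real.exp y - myc))
      ((Real.exp x - myc)⁻¹ * Real.exp x) x :=
    by have := (Real.hasDerivAt_log hp).comp x hE; exact this
  have hlogx : HasDerivAt Real.log x⁻¹ x := Real.hasDerivAt_log hx0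
  have hinv : HasDerivAt (fun y : ℝ => 1/y) (-(x^2)⁻¹) x := by
    simpa [one_div] using hasDerivAt_inv hx0
  have hinv2 : HasDerivAt (fun y : ℝ => 1/y^2)
      (-(2*x^((2:ℕ)-1)*1) / (x^2)^2) x := by
    simp only [one_div]; exact ((hasDerivAt_pow 2 x).inv (pow_ne_zero 2 hx0)).congr_deriv (by simp)
  have hdiv : HasDerivAt (fun y : ℝ => Real.exp y / (Real.exp y - myc))
      ((Real.exp x * (Real.exp x - myc) - Real.exp x * Real.exp x) / (Real.exp x - myc)^2) x :=
    hexp.div hE hp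
  have h1 : HasDerivAt (fun y : ℝ =>
      Real.exp y * (Real.log (Real.exp y - myc) + Real.log y))
      (Real.exp x * (Real.log (Real.exp x - myc) + Real.log x)
        + Real.exp x * ((Real.exp x - myc)⁻¹ * Real.exp x + x⁻¹)) x :=
    hexp.mul (hlogp.add hlogx)
  have h2 : HasDerivAt (fun y : ℝ =>
      (1 + (Real.exp y - myc)) * (Real.exp y / (Real.exp y - myc) + 1/y))
      (Real.exp x * (Real.exp x / (Real.exp x - myc) + 1/x)
        + (1 + (Real.exp x - myc)) *
          ((Real.exp x * (Real.exp x - myc) - Real.exp x * Real.exp x) / (Real.exp x - myc)^2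
            + -(x^2)⁻¹)) x :=
    (hE.const_add 1).mul (hdiv.add hinv)
  have h3 : HasDerivAt (fun y : ℝ => Real.exp y * (y+1))
      (Real.exp x * (x+1) + Real.exp x * 1) x :=
    hexp.mul ((hasDerivAt_id x).add_const 1)
  have H := ((((h1.add h2).sub hinv2).sub h3).sub hE)
  refine H.congr_deriv ?_
  unfold F2h
  field_simp
  ring

lemma hasDeriv_F2h {x : ℝ} (hx0 : x ≠ 0) (hp : Real.exp x - myc ≠ 0) :
    HasDerivAt F2h (F3h x) x := by
  have hexp := Real.hasDerivAt_exp x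
  have hE : HasDerivAt (fun y : ℝ => Real.exp y - myc) (Real.exp x) x := by
    simpa using hexp.sub_const myc
  have hlogp : HasDerivAt (fun y : ℝ => Real.log (Real.exp y - myc))
      ((Real.exp x - myc)⁻¹ * Real.exp x) x :=
    by have := (Real.hasDerivAt_log hp).comp x hE; exact this
  have hlogx : HasDerivAt Real.log x⁻¹ x := Real.hasDerivAt_log hx0
  have hinv : HasDerivAt (fun y : ℝ => 1/y) (-(x^2)⁻¹) x := by
    simpa [one_div] using hasDerivAt_inv hx0
  have hinv2 : HasDerivAt (fun y : ℝ => 1/y^2)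
      (-(2*x^((2:ℕ)-1)*1) / (x^2)^2) x := by
    simp only [one_div]; exact ((hasDerivAt_pow 2 x).inv (pow_ne_zero 2 hx0)).congr_deriv (by simp)
  have hinv3 : HasDerivAt (fun y : ℝ => 2/y^3)
      (2 * (-(3*x^((3:ℕ)-1)*1) / (x^3)^2)) x := by
    simpa [div_eq_mul_inv] using ((hasDerivAt_pow 3 x).inv (pow_ne_zero 3 hx0)).const_mul 2
  have hdiv : HasDerivAt (fun y : ℝ => Real.exp y / (Real.exp y - myc))
      ((Real.exp x * (Real.exp x - myc) - Real.exp x * Real.exp x) / (Real.exp x - myc)^2) x :=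
    hexp.div hE hp
  have hdiv2 : HasDerivAt (fun y : ℝ => -(myc * Real.exp y) / (Real.exp y - myc)^2)
      ((-(myc * Real.exp x) * (Real.exp x - myc)^2
        - -(myc * Real.exp x) * (2*(Real.exp x - myc)^((2:ℕ)-1)*Real.exp x))
        / ((Real.exp x - myc)^2)^2) x :=
    ((hexp.const_mul myc).neg).div (hE.pow 2) (pow_ne_zero 2 hp)
  have h1 : HasDerivAt (fun y : ℝ =>
      Real.exp y * (Real.log (Real.exp y - myc) + Real.log y))
      (Real.exp x * (Real.log (Real.exp x - myc) + Real.log x)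
        + Real.exp x * ((Real.exp x - myc)⁻¹ * Real.exp x + x⁻¹)) x :=
    hexp.mul (hlogp.add hlogx)
  have h2 : HasDerivAt (fun y : ℝ =>
      2 * Real.exp y * (Real.exp y / (Real.exp y - myc) + 1/y))
      (2 * Real.exp x * (Real.exp x / (Real.exp x - myc) + 1/x)
        + 2 * Real.exp x *
          ((Real.exp x * (Real.exp x - myc) - Real.exp x * Real.exp x) / (Real.exp x - myc)^2
            + -(x^2)⁻¹)) x := by
    exact ((hexp.const_mul 2).mul (hdiv.add hinv))
  have h3 : HasDerivAt (fun y : ℝ =>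
      (1 + (Real.exp y - myc)) * (-(myc * Real.exp y) / (Real.exp y - myc)^2 - 1/y^2))
      (Real.exp x * (-(myc * Real.exp x) / (Real.exp x - myc)^2 - 1/x^2)
        + (1 + (Real.exp x - myc)) *
          ((-(myc * Real.exp x) * (Real.exp x - myc)^2
            - -(myc * Real.exp x) * (2*(Real.exp x - myc)^((2:ℕ)-1)*Real.exp x))
            / ((Real.exp x - myc)^2)^2
           - (-(2*x^((2:ℕ)-1)*1) / (x^2)^2))) x :=
    (hE.const_add 1).mul (hdiv2.sub hinv2)
  have h4 : HasDerivAt (fun y : ℝ => Real.exp y * (y+2))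
      (Real.exp x * (x+2) + Real.exp x * 1) x :=
    hexp.mul ((hasDerivAt_id x).add_const 2)
  have H := (((((h1.add h2).add h3).add hinv3).sub h4).sub hexp)
  refine H.congr_deriv ?_
  unfold F3h
  field_simp
  ring

lemma myc_lb : (1.7182818283:ℝ) ≤ myc := by
  have := Real.exp_one_gt_d9; unfold myc; linarith
lemma myc_ub : myc ≤ (1.7182818286:ℝ) := by
  have := Real.exp_one_lt_d9; unfold myc; linarith


set_option maxHeartbeats 2000000 in
lemma F3_core (c P x u v ℓx ℓP : ℝ)
    (hc1 : 1.7182818283 ≤ c) (hc2 : c ≤ 1.7182818286)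
    (hx1 : 1 ≤ x) (hP1 : 1 ≤ P)
    (hu : P * u = 1) (hv : x * v = 1)
    (hℓx : 1 - v ≤ ℓx)
    (h04 : 1.5 ≤ x → 0.4 ≤ ℓx)
    (h1e : 2.7182818286 ≤ x → 1 ≤ ℓx)
    (hℓP : x - ℓP ≤ c*u - (c*u)^2/2 + (c*u)^3/3)
    (hxrel : (2 - x) * (P + c) ≤ c + 1)
    (hPub : x ≤ 1.5 → P ≤ 2.79) :
    0 ≤ (P + c) * (ℓP + ℓx - x - 1 + c*u + 3*v - 3*v^2 + (c - c^2)*u^2 + 2*c^2*u^3)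
        + (2*(1+P)*v^3 - 6*v^4) := by
  have hx0 : (0:ℝ) < x := by linarith
  have hP0 : (0:ℝ) < P := by linarith
  have hveq : v = 1/x := eq_one_div_of_mul_eq_one_left (by linarith [hv] : v * x = 1)
  have hueq : u = 1/P := eq_one_div_of_mul_eq_one_left (by linarith [hu] : u * P = 1)
  have hv0 : (0:ℝ) < v := by rw [hveq]; positivity
  have hu0 : (0:ℝ) < u := by rw [hueq]; positivity
  have hv1 : v ≤ 1 := by
    have := mul_nonneg (by linarith : (0:ℝ) ≤ x - 1) hv0.le
    linarith [this, hv]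
  have hu1 : u ≤ 1 := by
    have := mul_nonneg (by linarith : (0:ℝ) ≤ P - 1) hu0.le
    linarith [this, hu]
  have hc0 : (0:ℝ) < c := by linarith
  have hPc : (0:ℝ) < P + c := by linarith
  have hq2 : (0.242:ℝ) ≤ c - c^2/2 := by nlinarith
  have hq3 : (4.2139:ℝ) ≤ 2*c^2 - c^3/3 := by nlinarith [sq_nonneg (c - 1.7182818283)]
  have hu2 : (0:ℝ) ≤ u^2 := sq_nonneg u
  have hu3 : (0:ℝ) ≤ u^3 := by positivity
  have hA : ℓx - 1 + 3*v - 3*v^2 + (c - c^2/2)*u^2 + (2*c^2 - c^3/3)*u^3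
      ≤ ℓP + ℓx - x - 1 + c*u + 3*v - 3*v^2 + (c - c^2)*u^2 + 2*c^2*u^3 := by
    nlinarith [hℓP]
  rcases le_total x 1.5 with hx15 | hx15
  · -- case B : 1 ≤ x ≤ 1.5
    have hP279 := hPub hx15
    have hv23 : (2:ℝ)/3 ≤ v := by
      linarith [mul_nonneg (by linarith : (0:ℝ) ≤ 1.5 - x) hv0.le]
    have hx2 : 2*P + c - 1 ≤ x*(P+c) := by nlinarith [hxrel]
    have h2Pc : (0:ℝ) < 2*P + c - 1 := by linarith
    have hv2 : v*(2*P+c-1) ≤ P + c := by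
      have h5 := mul_le_mul_of_nonneg_left hx2 hv0.le
      have h6 : v*(x*(P+c)) = P + c := by
        rw [show v*(x*(P+c)) = (x*v)*(P+c) from by ring, hv, one_mul]
      linarith
    have hAhat : 2*v - 3*v^2 + 0.242*u^2 + 4.2139*u^3
        ≤ ℓP + ℓx - x - 1 + c*u + 3*v - 3*v^2 + (c - c^2)*u^2 + 2*c^2*u^3 := by
      linarith [hA, hℓx, mul_le_mul_of_nonneg_right hq2 hu2, mul_le_mul_of_nonneg_right hq3 hu3]
    have hred : 0 ≤ (P + c) * (2*v - 3*v^2 + 0.242*u^2 + 4.2139*u^3)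
        + (2*(1+P)*v^3 - 6*v^4) → 0 ≤ (P + c) * (ℓP + ℓx - x - 1 + c*u + 3*v - 3*v^2
          + (c - c^2)*u^2 + 2*c^2*u^3) + (2*(1+P)*v^3 - 6*v^4) := by
      intro h
      linarith [mul_le_mul_of_nonneg_left hAhat hPc.le]
    apply hred
    have hBeq : 2*(1+P)*v^3 - 6*v^4 = v^3*(2+2*P-6*v) := by ring
    have hv3 : (0:ℝ) < v^3 := by positivity
    rcases le_total P 1.2 with hb | hb
    · -- box 1 : P ∈ [1, 1.2]
      have hulo : (5:ℝ)/6 ≤ u := by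
        linarith [mul_nonneg (by linarith : (0:ℝ) ≤ 1.2 - P) hu0.le]
      have hpu2 := pow_le_pow_left₀ (by norm_num : (0:ℝ) ≤ 5/6) hulo 2
      have hpu3 := pow_le_pow_left₀ (by norm_num : (0:ℝ) ≤ 5/6) hulo 3
      have hD2 : (2.6:ℝ) ≤ 0.242*u^2 + 4.2139*u^3 := by norm_num at hpu2 hpu3 ⊢; linarith
      have hD1 : (-1:ℝ) ≤ 2*v - 3*v^2 := by
        nlinarith [mul_nonneg (by linarith : (0:ℝ) ≤ 1 - v) (by linarith : (0:ℝ) ≤ 3*v - 1)]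
      have hfac : (-2:ℝ) ≤ 2+2*P-6*v := by linarith
      have hBlow : (-2:ℝ) ≤ 2*(1+P)*v^3 - 6*v^4 := by
        rw [hBeq]
        have hvc : v^3 ≤ 1^3 := pow_le_pow_left₀ hv0.le hv1 3
        have h7 := mul_le_mul_of_nonneg_left hfac hv3.le
        have h8 := mul_le_mul_of_nonpos_left hvc (by norm_num : (-2:ℝ) ≤ 0)
        norm_num at hvc h8
        linarith
      have hprod : (1 + 1.7182818283) * 1.6 ≤ (P + c) * (2*v - 3*v^2 + 0.242*u^2 + 4.2139*u^3) :=
        mul_le_mul (by linarith) (by linarith) (by norm_num) (by linarith)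
      linarith
    rcases le_total P 1.5 with hb2 | hb2
    · -- box 2 : P ∈ [1.2, 1.5]
      have hvM : v ≤ 0.93587 := by
        have h1 : P + c ≤ 0.93587*(2*P+c-1) := by linarith
        exact (mul_le_mul_iff_of_pos_right h2Pc).mp (by linarith)
      have hulo : (2:ℝ)/3 ≤ u := by
        linarith [mul_nonneg (by linarith : (0:ℝ) ≤ 1.5 - P) hu0.le]
      have hpu2 := pow_le_pow_left₀ (by norm_num : (0:ℝ) ≤ 2/3) hulo 2
      have hpu3 := pow_le_pow_left₀ (by norm_num : (0:ℝ) ≤ 2/3) hulo 3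
      have hD2 : (1.3557:ℝ) ≤ 0.242*u^2 + 4.2139*u^3 := by norm_num at hpu2 hpu3 ⊢; linarith
      have hD1 : (-0.7559:ℝ) ≤ 2*v - 3*v^2 := by
        nlinarith [mul_nonneg (by linarith : (0:ℝ) ≤ 0.93587 - v) (by linarith : (0:ℝ) ≤ 3*(0.93587+v) - 2)]
      have hfac : (-1.2153:ℝ) ≤ 2+2*P-6*v := by linarith
      have hBlow : (-1.2153*0.93587^3:ℝ) ≤ 2*(1+P)*v^3 - 6*v^4 := by
        rw [hBeq]
        have hvc : v^3 ≤ 0.93587^3 := pow_le_pow_left₀ hv0.le hvM 3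
        have h7 := mul_le_mul_of_nonneg_left hfac hv3.le
        have h8 := mul_le_mul_of_nonpos_left hvc (by norm_num : (-1.2153:ℝ) ≤ 0)
        linarith
      have hprod : (1.2 + 1.7182818283) * (-0.7559 + 1.3557)
          ≤ (P + c) * (2*v - 3*v^2 + 0.242*u^2 + 4.2139*u^3) :=
        mul_le_mul (by linarith) (by linarith) (by norm_num) (by linarith)
      linarith
    rcases le_total P 2 with hb3 | hb3
    · -- box 3 : P ∈ [1.5, 2]
      have hvM : v ≤ 0.86553 := by
        have h1 : P + c ≤ 0.86553*(2*P+c-1) := by linarith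
        exact (mul_le_mul_iff_of_pos_right h2Pc).mp (by linarith)
      have hulo : (1:ℝ)/2 ≤ u := by
        linarith [mul_nonneg (by linarith : (0:ℝ) ≤ 2 - P) hu0.le]
      have hpu2 := pow_le_pow_left₀ (by norm_num : (0:ℝ) ≤ 1/2) hulo 2
      have hpu3 := pow_le_pow_left₀ (by norm_num : (0:ℝ) ≤ 1/2) hulo 3
      have hD2 : (0.5872:ℝ) ≤ 0.242*u^2 + 4.2139*u^3 := by norm_num at hpu2 hpu3 ⊢; linarith
      have hD1 : (-0.5165:ℝ) ≤ 2*v - 3*v^2 := by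
        nlinarith [mul_nonneg (by linarith : (0:ℝ) ≤ 0.86553 - v) (by linarith : (0:ℝ) ≤ 3*(0.86553+v) - 2)]
      have hfac : (-0.1932:ℝ) ≤ 2+2*P-6*v := by linarith
      have hBlow : (-0.1932*0.86553^3:ℝ) ≤ 2*(1+P)*v^3 - 6*v^4 := by
        rw [hBeq]
        have hvc : v^3 ≤ 0.86553^3 := pow_le_pow_left₀ hv0.le hvM 3
        have h7 := mul_le_mul_of_nonneg_left hfac hv3.le
        have h8 := mul_le_mul_of_nonpos_left hvc (by norm_num : (-0.1932:ℝ) ≤ 0)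
        linarith
      have hprod : (1.5 + 1.7182818283) * (-0.5165 + 0.5872)
          ≤ (P + c) * (2*v - 3*v^2 + 0.242*u^2 + 4.2139*u^3) :=
        mul_le_mul (by linarith) (by linarith) (by norm_num) (by linarith)
      linarith
    rcases le_total P 2.4 with hb4 | hb4
    · -- box 4 : P ∈ [2, 2.4]
      have hvM : v ≤ 0.78807 := by
        have h1 : P + c ≤ 0.78807*(2*P+c-1) := by linarith
        exact (mul_le_mul_iff_of_pos_right h2Pc).mp (by linarith)
      have hulo : (0.41666:ℝ) ≤ u := by
        linarith [mul_nonneg (by linarith : (0:ℝ) ≤ 2.4 - P) hu0.le]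
      have hpu2 := pow_le_pow_left₀ (by norm_num : (0:ℝ) ≤ 0.41666) hulo 2
      have hpu3 := pow_le_pow_left₀ (by norm_num : (0:ℝ) ≤ 0.41666) hulo 3
      have hD2 : (0.3468:ℝ) ≤ 0.242*u^2 + 4.2139*u^3 := by norm_num at hpu2 hpu3 ⊢; linarith
      have hD1 : (-0.2872:ℝ) ≤ 2*v - 3*v^2 := by
        nlinarith [mul_nonneg (by linarith : (0:ℝ) ≤ 0.78807 - v) (by linarith : (0:ℝ) ≤ 3*(0.78807+v) - 2)]
      have hBpos : (0:ℝ) ≤ 2*(1+P)*v^3 - 6*v^4 := by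
        rw [hBeq]; exact mul_nonneg hv3.le (by linarith)
      have hAh : (0:ℝ) ≤ 2*v - 3*v^2 + 0.242*u^2 + 4.2139*u^3 := by linarith
      linarith [mul_nonneg hPc.le hAh]
    · -- box 5 : P ∈ [2.4, 2.79]
      have hvM : v ≤ 0.74630 := by
        have h1 : P + c ≤ 0.74630*(2*P+c-1) := by linarith
        exact (mul_le_mul_iff_of_pos_right h2Pc).mp (by linarith)
      have hulo : (0.35842:ℝ) ≤ u := by
        linarith [mul_nonneg (by linarith : (0:ℝ) ≤ 2.79 - P) hu0.le]
      have hpu2 := pow_le_pow_left₀ (by norm_num : (0:ℝ) ≤ 0.35842) hulo 2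
      have hpu3 := pow_le_pow_left₀ (by norm_num : (0:ℝ) ≤ 0.35842) hulo 3
      have hD2 : (0.2251:ℝ) ≤ 0.242*u^2 + 4.2139*u^3 := by norm_num at hpu2 hpu3 ⊢; linarith
      have hD1 : (-0.1784:ℝ) ≤ 2*v - 3*v^2 := by
        nlinarith [mul_nonneg (by linarith : (0:ℝ) ≤ 0.74630 - v) (by linarith : (0:ℝ) ≤ 3*(0.74630+v) - 2)]
      have hBpos : (0:ℝ) ≤ 2*(1+P)*v^3 - 6*v^4 := by
        rw [hBeq]; exact mul_nonneg hv3.le (by linarith)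
      have hAh : (0:ℝ) ≤ 2*v - 3*v^2 + 0.242*u^2 + 4.2139*u^3 := by linarith
      linarith [mul_nonneg hPc.le hAh]
  · -- case A : x ≥ 1.5
    have hv23 : v ≤ 2/3 := by
      linarith [mul_nonneg (by linarith : (0:ℝ) ≤ x - 1.5) hv0.le, hv]
    have hB : (0:ℝ) ≤ 2*(1+P)*v^3 - 6*v^4 := by
      have h1 : (0:ℝ) ≤ v^3*(2+2*P-6*v) := mul_nonneg (by positivity) (by linarith)
      linarith [h1]
    have hA0 : (0:ℝ) ≤ ℓx - 1 + 3*v - 3*v^2 := by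
      rcases le_total x 2.7182818286 with h | h
      · have hl := h04 hx15
        have hvlo : (0.3678:ℝ) ≤ v := by
          linarith [mul_nonneg (by linarith : (0:ℝ) ≤ 2.7182818286 - x) hv0.le]
        linarith [mul_nonneg (by linarith : (0:ℝ) ≤ v - 0.3678) (by linarith : (0:ℝ) ≤ 2/3 - v)]
      · have hl := h1e h
        linarith [mul_nonneg hv0.le (by linarith : (0:ℝ) ≤ 1 - v)]
    have hAfull : (0:ℝ) ≤ ℓP + ℓx - x - 1 + c*u + 3*v - 3*v^2 + (c - c^2)*u^2 + 2*c^2*u^3 := by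
      linarith [hA, hA0, mul_le_mul_of_nonneg_right hq2 hu2, mul_le_mul_of_nonneg_right hq3 hu3,
        mul_nonneg (by norm_num : (0:ℝ) ≤ 0.242) hu2, mul_nonneg (by norm_num : (0:ℝ) ≤ 4.2139) hu3]
    linarith [mul_nonneg hPc.le hAfull, hB]

lemma F3h_nonneg {x : ℝ} (hx : 1 ≤ x) : 0 ≤ F3h x := by
  have hx0 : (0:ℝ) < x := by linarith
  have hE1 : Real.exp 1 ≤ Real.exp x := Real.exp_le_exp.mpr hx
  have hP1 : 1 ≤ Real.exp x - myc := by unfold myc; linarith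
  have hP0 : (0:ℝ) < Real.exp x - myc := by linarith
  have hc1 := myc_lb
  have hc2 := myc_ub
  -- decomposition
  have hkey : F3h x = ((Real.exp x - myc) + myc) *
      (Real.log (Real.exp x - myc) + Real.log x - x - 1
        + myc*(Real.exp x - myc)⁻¹ + 3*x⁻¹ - 3*(x⁻¹)^2
        + (myc - myc^2)*((Real.exp x - myc)⁻¹)^2
        + 2*myc^2*((Real.exp x - myc)⁻¹)^3)
      + (2*(1+(Real.exp x - myc))*(x⁻¹)^3 - 6*(x⁻¹)^4) := by
    unfold F3h
    field_simp
    ring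
  rw [hkey]
  apply F3_core myc (Real.exp x - myc) x (Real.exp x - myc)⁻¹ x⁻¹
      (Real.log x) (Real.log (Real.exp x - myc)) hc1 hc2 hx hP1
      (mul_inv_cancel₀ (ne_of_gt hP0)) (mul_inv_cancel₀ (ne_of_gt hx0))
  · -- 1 - x⁻¹ ≤ log x
    have h1 : Real.log x⁻¹ ≤ x⁻¹ - 1 :=
      Real.log_le_sub_one_of_pos (by positivity)
    rw [Real.log_inv] at h1
    linarith
  · intro h15
    rw [show (0.4:ℝ) = 2/5 by norm_num, Real.le_log_iff_exp_le hx0]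
    have h5 : Real.exp (2/5) ^ 5 = Real.exp 2 := by
      rw [← Real.exp_nat_mul]; norm_num
    have h2 : Real.exp 2 = Real.exp 1 ^ 2 := by
      rw [← Real.exp_nat_mul]; norm_num
    have hlt : Real.exp (2/5) ^ 5 < 1.5 ^ 5 := by
      rw [h5, h2]
      nlinarith [Real.exp_one_lt_d9, Real.exp_pos 1]
    have := lt_of_pow_lt_pow_left₀ 5 (by norm_num : (0:ℝ) ≤ 1.5) hlt
    linarith
  · intro h
    rw [Real.le_log_iff_exp_le hx0]
    linarith [Real.exp_one_lt_d9]
  · -- x - log P ≤ cubic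
    have hlog : x - Real.log (Real.exp x - myc)
        = Real.log (1 + myc * (Real.exp x - myc)⁻¹) := by
      rw [show (1:ℝ) + myc * (Real.exp x - myc)⁻¹
          = Real.exp x / (Real.exp x - myc) from by field_simp; ring,
        Real.log_div (Real.exp_ne_zero x) (ne_of_gt hP0), Real.log_exp]
    rw [hlog]
    exact my_log_cubic (by positivity)
  · -- (2-x)*(exp x) ≤ myc + 1
    have h1 := Real.add_one_le_exp (1 - x)
    rw [Real.exp_sub] at h1
    have h2 : (2 - x) * Real.exp x ≤ Real.exp 1 := by
      rw [div_eq_mul_inv] at h1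
      have := mul_le_mul_of_nonneg_right h1 (Real.exp_pos x).le
      rw [mul_assoc, inv_mul_cancel₀ (Real.exp_ne_zero x), mul_one] at this
      linarith
    have : ((Real.exp x - myc) + myc) = Real.exp x := by ring
    rw [this]
    unfold myc at *
    linarith
  · intro h15
    have hE : Real.exp x ≤ Real.exp 1.5 := Real.exp_le_exp.mpr h15
    have h5 : Real.exp 1.5 ^ 2 = Real.exp 3 := by
      rw [← Real.exp_nat_mul]; norm_num
    have h3 : Real.exp 3 = Real.exp 1 ^ 3 := by
      rw [← Real.exp_nat_mul]; norm_num
    have hlt : Real.exp 1.5 ^ 2 < 4.5 ^ 2 := by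
      rw [h5, h3]
      have h7 : Real.exp 1 ^ 3 < 2.7182818286 ^ 3 :=
        pow_lt_pow_left₀ Real.exp_one_lt_d9 (Real.exp_pos 1).le (by norm_num)
      nlinarith [h7]
    have h45 := lt_of_pow_lt_pow_left₀ 2 (by norm_num : (0:ℝ) ≤ 4.5) hlt
    linarith

lemma myp_pos {y : ℝ} (hy : 1 ≤ y) : 0 < Real.exp y - myc := by
  have h := Real.exp_le_exp.mpr hy
  unfold myc
  linarith

lemma F2h_nonneg {x : ℝ} (hx : 1 ≤ x) : 0 ≤ F2h x := by
  have h := my_le_of_deriv_nonneg F2h F3h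
    (fun y hy => hasDeriv_F2h (by linarith : y ≠ 0) (ne_of_gt (myp_pos hy)))
    (fun y hy => F3h_nonneg hy) hx
  rwa [F2h_one] at h

lemma F1h_nonneg {x : ℝ} (hx : 1 ≤ x) : 0 ≤ F1h x := by
  have h := my_le_of_deriv_nonneg F1h F2h
    (fun y hy => hasDeriv_F1h (by linarith : y ≠ 0) (ne_of_gt (myp_pos hy)))
    (fun y hy => F2h_nonneg hy) hx
  rwa [F1h_one] at h

lemma Fh_nonneg {x : ℝ} (hx : 1 ≤ x) : 0 ≤ Fh x := by
  have h := my_le_of_deriv_nonneg Fh F1h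
    (fun y hy => hasDeriv_Fh (by linarith : y ≠ 0) (ne_of_gt (myp_pos hy)))
    (fun y hy => F1h_nonneg hy) hx
  rwa [Fh_one] at h

/-- For ρ ≥ 1 and r₁ = log ρ + log(log(ρ + e − 1)), we have k(r₁) ≥ 0. -/
theorem k_at_r1_nonneg (ρ : ℝ) (hρ : 1 ≤ ρ) :
    let r₁ := Real.log ρ + Real.log (Real.log (ρ + (Real.exp 1 - 1)))
    (1 + ρ) * r₁ - (Real.exp r₁ - 1) - ρ * (1 - Real.exp (-r₁)) ≥ 0 := by
  intro r₁
  have hρ0 : (0:ℝ) < ρ := by linarith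
  set L := Real.log (ρ + (Real.exp 1 - 1)) with hLdef
  have hsum0 : (0:ℝ) < ρ + (Real.exp 1 - 1) := by
    have := Real.exp_pos 1; linarith
  have hL1 : 1 ≤ L := by
    rw [hLdef, Real.le_log_iff_exp_le hsum0]
    linarith
  have hL0 : (0:ℝ) < L := by linarith
  have hexpL : Real.exp L = ρ + (Real.exp 1 - 1) := Real.exp_log hsum0
  have hr : r₁ = Real.log ρ + Real.log L := rfl
  have hexpr : Real.exp r₁ = ρ * L := by
    rw [hr, Real.exp_add, Real.exp_log hρ0, Real.exp_log hL0]
  have hexprneg : Real.exp (-r₁) = (ρ * L)⁻¹ := by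
    rw [Real.exp_neg, hexpr]
  have hPL : Real.exp L - myc = ρ := by
    rw [hexpL]; unfold myc; ring
  have hFhL : Fh L = (1 + ρ) * (Real.log ρ + Real.log L) + 1 + 1/L - ρ * (L+1) := by
    unfold Fh
    rw [hPL]
  have h0 := Fh_nonneg hL1
  rw [hFhL] at h0
  have hinv : ρ * (ρ * L)⁻¹ = 1/L := by
    field_simp
  rw [ge_iff_le, hr, hexpr, hexprneg]
  have hexp : ρ * (1 - (ρ * L)⁻¹) = ρ - 1/L := by
    rw [mul_sub, hinv, mul_one]
  rw [hexp]
  linarith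
end

section
/- For ρ ≥ 1, the function k(r) = (1 + ρ)r − (e^r − 1) − ρ(1 − e^{−r}) satisfies k(r) ≥ 0 for all r with 0 ≤ r ≤ log ρ + log(log(ρ + e − 1)). -/
set_option maxHeartbeats 1000000

noncomputable def aa (ρ : ℝ) : ℝ := ρ + Real.exp 1 - 1
noncomputable def LL (ρ : ℝ) : ℝ := Real.log (aa ρ)
noncomputable def FF (ρ : ℝ) : ℝ :=
  (1+ρ)*(Real.log ρ + Real.log (LL ρ)) + 1 - ρ - ρ*(LL ρ) + (LL ρ)⁻¹
noncomputable def FF1 (ρ : ℝ) : ℝ :=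
  Real.log ρ + Real.log (LL ρ) + (1+ρ)*(ρ⁻¹ + (aa ρ*LL ρ)⁻¹) - 1 - LL ρ
    - ρ/(aa ρ) - (aa ρ*(LL ρ)^2)⁻¹
noncomputable def FF2 (ρ : ℝ) : ℝ :=
  2/ρ + 2/(aa ρ*LL ρ) - (1+ρ)/ρ^2 - (1+ρ)*(LL ρ+1)/((aa ρ)^2*(LL ρ)^2)
    - 1/(aa ρ) - (Real.exp 1-1)/(aa ρ)^2 + (LL ρ+2)/((aa ρ)^2*(LL ρ)^3)

lemma one_lt_e : (1:ℝ) < Real.exp 1 := by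
  have := Real.exp_one_gt_d9; linarith

lemma aa_pos {ρ : ℝ} (hρ : 1 ≤ ρ) : 0 < aa ρ := by
  unfold aa; have := one_lt_e; linarith

lemma e_le_aa {ρ : ℝ} (hρ : 1 ≤ ρ) : Real.exp 1 ≤ aa ρ := by unfold aa; linarith

lemma LL_ge_one {ρ : ℝ} (hρ : 1 ≤ ρ) : 1 ≤ LL ρ := by
  have h := Real.log_le_log (Real.exp_pos 1) (e_le_aa hρ)
  rwa [Real.log_exp] at h

lemma LL_pos {ρ : ℝ} (hρ : 1 ≤ ρ) : 0 < LL ρ := lt_of_lt_of_le one_pos (LL_ge_one hρ)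

lemma LL_upper {ρ : ℝ} (hρ : 1 ≤ ρ) : Real.exp 1 * LL ρ ≤ aa ρ := by
  have hE := Real.exp_pos 1
  have h1 : Real.log (aa ρ / Real.exp 1) ≤ aa ρ / Real.exp 1 - 1 :=
    Real.log_le_sub_one_of_pos (by have := aa_pos hρ; positivity)
  rw [Real.log_div (ne_of_gt (aa_pos hρ)) (ne_of_gt hE), Real.log_exp] at h1
  have h2 : LL ρ ≤ aa ρ / Real.exp 1 := by unfold LL at *; linarith
  calc Real.exp 1 * LL ρ ≤ Real.exp 1 * (aa ρ / Real.exp 1) := by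
        exact mul_le_mul_of_nonneg_left h2 hE.le
    _ = aa ρ := by field_simp

lemma key_poly (E u w : ℝ) (hE1 : (2.7182818 : ℝ) ≤ E) (hE2 : E ≤ 2.7182819)
    (hw : 0 ≤ w) (hg : E * w ≤ u) :
    0 ≤ 2*(1+u)*(u+E)^2*(1+w)^3 + 2*(1+u)^2*(u+E)*(1+w)^2 - (2+u)*(u+E)^2*(1+w)^3
        + (1+u)^2*(w+3) - (1+u)^2*(2+u)*(w+2)*(1+w) - (1+u)^2*(u+E)*(1+w)^3
        - (E-1)*(1+u)^2*(1+w)^3 := by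
  have hE0 : (0:ℝ) < E := by linarith
  have hs : 0 ≤ u - E*w := by linarith
  have hsq1 : (7.38905:ℝ) ≤ E^2 := by nlinarith
  have hsq2 : E^2 ≤ (7.38906:ℝ) := by nlinarith
  have hcu1 : (20.0855:ℝ) ≤ E^3 := by nlinarith
  have hcu2 : E^3 ≤ (20.0856:ℝ) := by nlinarith
  have c1 : (0:ℝ) ≤ E^3 - 3*E - 2 := by linarith
  have c2 : (0:ℝ) ≤ 5*E^3 - 6*E^2 - 10*E + 1 := by linarith
  have c3 : (0:ℝ) ≤ 7*E^3 - 14*E^2 - 2*E + 1 := by linarith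
  have c4 : (0:ℝ) ≤ 4*E^3 - 7*E^2 + E := by linarith
  have c5 : (0:ℝ) ≤ E^3 - E^2 := by linarith
  have c6 : (0:ℝ) ≤ E^2 - 1 := by linarith
  have c7 : (0:ℝ) ≤ 7*E^2 - 8*E - 6 := by linarith
  have c8 : (0:ℝ) ≤ 11*E^2 - 20*E := by linarith
  have c9 : (0:ℝ) ≤ 8*E^2 - 10*E + 1 := by linarith
  have c10 : (0:ℝ) ≤ 3*E^2 - 2*E := by linarith
  have c11 : (0:ℝ) ≤ 2*E - 2 := by linarith
  have c12 : (0:ℝ) ≤ 4*E - 6 := by linarith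
  have c13 : (0:ℝ) ≤ 5*E - 3 := by linarith
  have c14 : (0:ℝ) ≤ 3*E - 1 := by linarith
  set s : ℝ := u - E*w with hsdef
  have key : 2*(1+u)*(u+E)^2*(1+w)^3 + 2*(1+u)^2*(u+E)*(1+w)^2 - (2+u)*(u+E)^2*(1+w)^3
        + (1+u)^2*(w+3) - (1+u)^2*(2+u)*(w+2)*(1+w) - (1+u)^2*(u+E)*(1+w)^3
        - (E-1)*(1+u)^2*(1+w)^3
      = (E^3 - 3*E - 2)*w + (5*E^3 - 6*E^2 - 10*E + 1)*w^2 + (7*E^3 - 14*E^2 - 2*E + 1)*w^3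
        + (4*E^3 - 7*E^2 + E)*w^4 + (E^3 - E^2)*w^5
        + (E^2 - 1)*s + (7*E^2 - 8*E - 6)*s*w + (11*E^2 - 20*E)*s*w^2
        + (8*E^2 - 10*E + 1)*s*w^3 + (3*E^2 - 2*E)*s*w^4
        + (2*E - 2)*s^2 + (4*E - 6)*s^2*w + (5*E - 3)*s^2*w^2 + (3*E - 1)*s^2*w^3
        + s^3*w + s^3*w^2 := by
    rw [hsdef]; ring
  rw [key]
  have m1 : 0 ≤ s := hs
  have m2 : 0 ≤ s*w := mul_nonneg hs hw
  have mw2 : 0 ≤ w^2 := sq_nonneg w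
  have mw3 : 0 ≤ w^3 := pow_nonneg hw 3
  have mw4 : 0 ≤ w^4 := pow_nonneg hw 4
  have mw5 : 0 ≤ w^5 := pow_nonneg hw 5
  have ms2 : 0 ≤ s^2 := sq_nonneg s
  have msw2 : 0 ≤ s*w^2 := mul_nonneg hs (pow_nonneg hw 2)
  have msw3 : 0 ≤ s*w^3 := mul_nonneg hs (pow_nonneg hw 3)
  have msw4 : 0 ≤ s*w^4 := mul_nonneg hs (pow_nonneg hw 4)
  have ms2w : 0 ≤ s^2*w := mul_nonneg (sq_nonneg s) hw
  have ms2w2 : 0 ≤ s^2*w^2 := mul_nonneg (sq_nonneg s) (pow_nonneg hw 2)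
  have ms2w3 : 0 ≤ s^2*w^3 := mul_nonneg (sq_nonneg s) (pow_nonneg hw 3)
  have ms3w : 0 ≤ s^3*w := mul_nonneg (pow_nonneg hs 3) hw
  have ms3w2 : 0 ≤ s^3*w^2 := mul_nonneg (pow_nonneg hs 3) (pow_nonneg hw 2)
  have t (c x : ℝ) (hc : 0 ≤ c) (hx : 0 ≤ x) : 0 ≤ c * x := mul_nonneg hc hx
  linarith [t _ _ c1 hw, t _ _ c2 mw2, t _ _ c3 mw3, t _ _ c4 mw4, t _ _ c5 mw5,
    t _ _ c6 m1, t _ _ c7 m2, t _ _ c8 msw2, t _ _ c9 msw3, t _ _ c10 msw4,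
    t _ _ c11 ms2, t _ _ c12 ms2w, t _ _ c13 ms2w2, t _ _ c14 ms2w3, ms3w, ms3w2]

lemma FF2_nonneg {ρ : ℝ} (hρ : 1 ≤ ρ) : 0 ≤ FF2 ρ := by
  have hE1 : (2.7182818 : ℝ) ≤ Real.exp 1 := by
    have := Real.exp_one_gt_d9; norm_num at this ⊢; linarith
  have hE2 : Real.exp 1 ≤ (2.7182819 : ℝ) := by
    have := Real.exp_one_lt_d9; norm_num at this ⊢; linarith
  have hw : (0:ℝ) ≤ LL ρ - 1 := by linarith [LL_ge_one hρ]
  have hg : Real.exp 1 * (LL ρ - 1) ≤ ρ - 1 := by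
    have := LL_upper hρ; unfold aa at this; nlinarith
  have hP := key_poly (Real.exp 1) (ρ-1) (LL ρ-1) hE1 hE2 hw hg
  have ha := aa_pos hρ
  have hL := LL_pos hρ
  have hρ0 : (0:ℝ) < ρ := by linarith
  have haa : aa ρ = ρ + Real.exp 1 - 1 := rfl
  have hPP : 0 ≤ 2*ρ*(aa ρ)^2*(LL ρ)^3 + 2*ρ^2*(aa ρ)*(LL ρ)^2 - (1+ρ)*(aa ρ)^2*(LL ρ)^3
      + ρ^2*(LL ρ+2) - ρ^2*(1+ρ)*(LL ρ+1)*(LL ρ) - ρ^2*(aa ρ)*(LL ρ)^3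
      - (Real.exp 1-1)*ρ^2*(LL ρ)^3 := by
    rw [haa]; nlinarith [hP]
  have hform : FF2 ρ = (2*ρ*(aa ρ)^2*(LL ρ)^3 + 2*ρ^2*(aa ρ)*(LL ρ)^2 - (1+ρ)*(aa ρ)^2*(LL ρ)^3
      + ρ^2*(LL ρ+2) - ρ^2*(1+ρ)*(LL ρ+1)*(LL ρ) - ρ^2*(aa ρ)*(LL ρ)^3
      - (Real.exp 1-1)*ρ^2*(LL ρ)^3) / (ρ^2*(aa ρ)^2*(LL ρ)^3) := by
    unfold FF2; field_simp; ring
  rw [hform]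
  exact div_nonneg hPP (by positivity)

lemma hasDerivAt_aa (ρ : ℝ) : HasDerivAt aa 1 ρ := by
  have h : HasDerivAt (fun x : ℝ => x + (Real.exp 1 - 1)) 1 ρ :=
    (hasDerivAt_id ρ).add_const _
  convert h using 2 with x
  · unfold aa; ring

lemma hasDerivAt_LL {ρ : ℝ} (hρ : 1 ≤ ρ) : HasDerivAt LL (aa ρ)⁻¹ ρ := by
  have h := (hasDerivAt_aa ρ).log (ne_of_gt (aa_pos hρ))
  simp only [one_div] at h
  exact h

lemma hasDerivAt_FF {ρ : ℝ} (hρ : 1 ≤ ρ) : HasDerivAt FF (FF1 ρ) ρ := by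
  have hρ0 : (0:ℝ) < ρ := by linarith
  have ha := aa_pos hρ
  have hL := LL_pos hρ
  have hlog : HasDerivAt Real.log ρ⁻¹ ρ := Real.hasDerivAt_log (ne_of_gt hρ0)
  have hlogL : HasDerivAt (fun x => Real.log (LL x)) ((aa ρ)⁻¹ / LL ρ) ρ :=
    (hasDerivAt_LL hρ).log (ne_of_gt hL)
  have h1 : HasDerivAt (fun x : ℝ => (1+x)*(Real.log x + Real.log (LL x)))
      (1*(Real.log ρ + Real.log (LL ρ)) + (1+ρ)*(ρ⁻¹ + (aa ρ)⁻¹ / LL ρ)) ρ :=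
    (((hasDerivAt_id ρ).const_add 1)).mul (hlog.add hlogL)
  have h2 : HasDerivAt (fun x : ℝ => x * LL x) (1 * LL ρ + ρ * (aa ρ)⁻¹) ρ :=
    (hasDerivAt_id ρ).mul (hasDerivAt_LL hρ)
  have h3 : HasDerivAt (fun x : ℝ => (LL x)⁻¹) (-(aa ρ)⁻¹ / (LL ρ)^2) ρ :=
    (hasDerivAt_LL hρ).inv (ne_of_gt hL)
  have h := (((h1.add_const 1).sub (hasDerivAt_id ρ)).sub h2).add h3
  refine h.congr_deriv ?_
  unfold FF1
  field_simp
  ring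

lemma hasDerivAt_FF1 {ρ : ℝ} (hρ : 1 ≤ ρ) : HasDerivAt FF1 (FF2 ρ) ρ := by
  have hρ0 : (0:ℝ) < ρ := by linarith
  have ha := aa_pos hρ
  have hL := LL_pos hρ
  have hlog : HasDerivAt Real.log ρ⁻¹ ρ := Real.hasDerivAt_log (ne_of_gt hρ0)
  have hlogL : HasDerivAt (fun x => Real.log (LL x)) ((aa ρ)⁻¹ / LL ρ) ρ :=
    (hasDerivAt_LL hρ).log (ne_of_gt hL)
  have hinv : HasDerivAt (fun x : ℝ => x⁻¹) (-(1:ℝ) / ρ^2) ρ := by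
    have := (hasDerivAt_id ρ).inv (ne_of_gt hρ0)
    simp only [neg_div] at this ⊢
    exact this
  have haL : HasDerivAt (fun x => aa x * LL x) (1 * LL ρ + aa ρ * (aa ρ)⁻¹) ρ :=
    (hasDerivAt_aa ρ).mul (hasDerivAt_LL hρ)
  have haLinv : HasDerivAt (fun x => (aa x * LL x)⁻¹)
      (-(1 * LL ρ + aa ρ * (aa ρ)⁻¹) / (aa ρ * LL ρ)^2) ρ :=
    haL.inv (ne_of_gt (mul_pos ha hL))
  have h1 : HasDerivAt (fun x : ℝ => (1+x)*(x⁻¹ + (aa x*LL x)⁻¹))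
      (1*(ρ⁻¹ + (aa ρ*LL ρ)⁻¹)
        + (1+ρ)*(-(1:ℝ)/ρ^2 + -(1 * LL ρ + aa ρ * (aa ρ)⁻¹) / (aa ρ * LL ρ)^2)) ρ :=
    ((hasDerivAt_id ρ).const_add 1).mul (hinv.add haLinv)
  have h2 : HasDerivAt (fun x : ℝ => x / aa x) ((Real.exp 1 - 1) / (aa ρ)^2) ρ := by
    have := (hasDerivAt_id ρ).div (hasDerivAt_aa ρ) (ne_of_gt ha)
    refine this.congr_deriv ?_
    simp only [id_eq]
    unfold aa; ring
  have hL2 : HasDerivAt (fun x => aa x * (LL x)^2)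
      (1 * (LL ρ)^2 + aa ρ * (2 * LL ρ ^ 1 * (aa ρ)⁻¹)) ρ :=
    (hasDerivAt_aa ρ).mul ((hasDerivAt_LL hρ).pow 2)
  have hL2inv : HasDerivAt (fun x => (aa x * (LL x)^2)⁻¹)
      (-(1 * (LL ρ)^2 + aa ρ * (2 * LL ρ ^ 1 * (aa ρ)⁻¹)) / (aa ρ * (LL ρ)^2)^2) ρ := by
    refine hL2.inv ?_
    positivity
  have h := (((((hlog.add hlogL).add h1).sub_const 1).sub (hasDerivAt_LL hρ)).sub h2).sub hL2inv
  refine h.congr_deriv ?_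
  unfold FF2
  field_simp
  ring

lemma FF1_one : FF1 1 = 0 := by
  have ha : aa 1 = Real.exp 1 := by unfold aa; ring
  have hL : LL 1 = 1 := by unfold LL; rw [ha, Real.log_exp]
  have hE : Real.exp 1 ≠ 0 := ne_of_gt (Real.exp_pos 1)
  unfold FF1
  rw [ha, hL, Real.log_one]
  field_simp
  ring

lemma FF_one : FF 1 = 0 := by
  have ha : aa 1 = Real.exp 1 := by unfold aa; ring
  have hL : LL 1 = 1 := by unfold LL; rw [ha, Real.log_exp]
  unfold FF
  rw [hL, Real.log_one]
  norm_num

lemma FF1_nonneg {ρ : ℝ} (hρ : 1 ≤ ρ) : 0 ≤ FF1 ρ := by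
  have mono : MonotoneOn FF1 (Set.Ici 1) := by
    apply monotoneOn_of_deriv_nonneg (convex_Ici 1)
    · exact fun x hx => (hasDerivAt_FF1 hx).continuousAt.continuousWithinAt
    · intro x hx
      rw [interior_Ici] at hx
      exact (hasDerivAt_FF1 hx.le).differentiableAt.differentiableWithinAt
    · intro x hx
      rw [interior_Ici] at hx
      rw [(hasDerivAt_FF1 hx.le).deriv]
      exact FF2_nonneg hx.le
  have := mono (Set.self_mem_Ici) (Set.mem_Ici.2 hρ) hρ
  rw [FF1_one] at this
  exact this

lemma FF_nonneg {ρ : ℝ} (hρ : 1 ≤ ρ) : 0 ≤ FF ρ := by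
  have mono : MonotoneOn FF (Set.Ici 1) := by
    apply monotoneOn_of_deriv_nonneg (convex_Ici 1)
    · exact fun x hx => (hasDerivAt_FF hx).continuousAt.continuousWithinAt
    · intro x hx
      rw [interior_Ici] at hx
      exact (hasDerivAt_FF hx.le).differentiableAt.differentiableWithinAt
    · intro x hx
      rw [interior_Ici] at hx
      rw [(hasDerivAt_FF hx.le).deriv]
      exact FF1_nonneg hx.le
  have := mono (Set.self_mem_Ici) (Set.mem_Ici.2 hρ) hρ
  rw [FF_one] at this
  exact this

/-- For ρ ≥ 1, k(r) ≥ 0 for all 0 ≤ r ≤ log ρ + log(log(ρ + e − 1)). -/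
theorem k_nonneg_on_interval (ρ : ℝ) (hρ : 1 ≤ ρ) :
    ∀ r : ℝ, 0 ≤ r → r ≤ Real.log ρ + Real.log (Real.log (ρ + (Real.exp 1 - 1))) →
      (1 + ρ) * r - (Real.exp r - 1) - ρ * (1 - Real.exp (-r)) ≥ 0 := by
  intro r hr0 hr1
  have hρ0 : (0:ℝ) < ρ := by linarith
  have harg : ρ + (Real.exp 1 - 1) = aa ρ := by unfold aa; ring
  rw [harg] at hr1
  have hL1 : 1 ≤ LL ρ := LL_ge_one hρ
  have hL0 : (0:ℝ) < LL ρ := LL_pos hρ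
  have hlogρ : 0 ≤ Real.log ρ := Real.log_nonneg hρ
  have hlogL : 0 ≤ Real.log (LL ρ) := Real.log_nonneg hL1
  set k : ℝ → ℝ := fun t => (1+ρ)*t - (Real.exp t - 1) - ρ*(1 - Real.exp (-t)) with hk
  have hderiv : ∀ t : ℝ, HasDerivAt k ((1+ρ) - Real.exp t - ρ*Real.exp (-t)) t := by
    intro t
    have h1 : HasDerivAt (fun t : ℝ => (1+ρ)*t) (1+ρ) t := by
      simpa using (hasDerivAt_id t).const_mul (1+ρ)
    have h2 : HasDerivAt Real.exp (Real.exp t) t := Real.hasDerivAt_exp t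
    have h3 : HasDerivAt (fun t : ℝ => Real.exp (-t)) (-Real.exp (-t)) t := by
      have := (Real.hasDerivAt_exp (-t)).comp t (hasDerivAt_neg t)
      simp only [mul_neg, mul_one] at this
      exact this
    have h4 : HasDerivAt (fun t : ℝ => 1 - Real.exp (-t)) (Real.exp (-t)) t := by
      simpa using h3.const_sub 1
    have h5 : HasDerivAt (fun t : ℝ => ρ*(1 - Real.exp (-t))) (ρ*Real.exp (-t)) t :=
      h4.const_mul ρ
    exact (h1.sub (h2.sub_const 1)).sub h5
  have k0 : k 0 = 0 := by simp [hk]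
  show 0 ≤ k r
  rcases le_or_gt r (Real.log ρ) with hcase | hcase
  · have mono : MonotoneOn k (Set.Icc 0 (Real.log ρ)) := by
      apply monotoneOn_of_deriv_nonneg (convex_Icc _ _)
      · exact fun x hx => (hderiv x).continuousAt.continuousWithinAt
      · exact fun x hx => (hderiv x).differentiableAt.differentiableWithinAt
      · intro x hx
        rw [interior_Icc] at hx
        rw [(hderiv x).deriv]
        have hx1 : 1 ≤ Real.exp x := by
          rw [← Real.exp_zero]; exact Real.exp_le_exp.2 hx.1.le
        have hx2 : Real.exp x ≤ ρ := by
          have := Real.exp_le_exp.2 hx.2.le; rwa [Real.exp_log hρ0] at this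
        have hpos : 0 < Real.exp x := Real.exp_pos x
        have hfact : (1+ρ) - Real.exp x - ρ*Real.exp (-x)
            = (Real.exp x - 1) * (ρ - Real.exp x) / Real.exp x := by
          rw [Real.exp_neg]; field_simp; ring
        rw [hfact]
        exact div_nonneg (mul_nonneg (by linarith) (by linarith)) hpos.le
    have := mono (Set.mem_Icc.2 ⟨le_refl 0, hlogρ⟩) (Set.mem_Icc.2 ⟨hr0, hcase⟩) hr0
    rw [k0] at this
    exact this
  · have anti : AntitoneOn k (Set.Icc (Real.log ρ) (Real.log ρ + Real.log (LL ρ))) := by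
      apply antitoneOn_of_deriv_nonpos (convex_Icc _ _)
      · exact fun x hx => (hderiv x).continuousAt.continuousWithinAt
      · exact fun x hx => (hderiv x).differentiableAt.differentiableWithinAt
      · intro x hx
        rw [interior_Icc] at hx
        rw [(hderiv x).deriv]
        have hx1 : ρ ≤ Real.exp x := by
          have := Real.exp_le_exp.2 hx.1.le; rwa [Real.exp_log hρ0] at this
        have hx2 : (1:ℝ) ≤ Real.exp x := by linarith
        have hpos : 0 < Real.exp x := Real.exp_pos x
        have hfact : (1+ρ) - Real.exp x - ρ*Real.exp (-x)
            = (Real.exp x - 1) * (ρ - Real.exp x) / Real.exp x := by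
          rw [Real.exp_neg]; field_simp; ring
        rw [hfact]
        apply div_nonpos_of_nonpos_of_nonneg _ hpos.le
        exact mul_nonpos_of_nonneg_of_nonpos (by linarith) (by linarith)
    have hr1' : r ∈ Set.Icc (Real.log ρ) (Real.log ρ + Real.log (LL ρ)) :=
      Set.mem_Icc.2 ⟨hcase.le, hr1⟩
    have hend : Real.log ρ + Real.log (LL ρ) ∈
        Set.Icc (Real.log ρ) (Real.log ρ + Real.log (LL ρ)) :=
      Set.mem_Icc.2 ⟨by linarith, le_refl _⟩
    have hmono := anti hr1' hend hr1
    have hkend : k (Real.log ρ + Real.log (LL ρ)) = FF ρ := by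
      have hexp : Real.exp (Real.log ρ + Real.log (LL ρ)) = ρ * LL ρ := by
        rw [Real.exp_add, Real.exp_log hρ0, Real.exp_log hL0]
      have hexpneg : Real.exp (-(Real.log ρ + Real.log (LL ρ))) = (ρ * LL ρ)⁻¹ := by
        rw [Real.exp_neg, hexp]
      rw [hk]
      simp only
      rw [hexp, hexpneg]
      unfold FF
      field_simp
      ring
    rw [hkend] at hmono
    exact le_trans (FF_nonneg hρ) hmono
end

section
/- Let p, q, P, Q be positive reals with P = ρQ for some ρ > 1, and set r = log(p/q) with 0 < r ≤ log ρ + log(log(ρ + e − 1)). Then |log(p/q)|·Q + |log(q/p)|·P ≥ |1 − p/q|·Q + |1 − q/p|·P; i.e., the 'reverse' derivative magnitude dominates the 'forward' derivative magnitude. -/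
set_option maxHeartbeats 1000000 in
theorem sumNonneg (c b n : ℝ) (hc : 2.7182 ≤ c) (hc2 : c ≤ 2.7183)
    (hb0 : 0 ≤ b) (hn0 : 0 ≤ n) :
    0 ≤ ((-2) + (-3)*c^1 + (1)*c^3) * (n^1) + ((1) + (-10)*c^1 + (-6)*c^2 + (5)*c^3) * (n^2) + ((1) + (-2)*c^1 + (-14)*c^2 + (7)*c^3) * (n^3) + ((1)*c^1 + (-7)*c^2 + (4)*c^3) * (n^4) + ((-1)*c^2 + (1)*c^3) * (n^5) + ((-1) + (1)*c^2) * (b^1) + ((-6) + (-8)*c^1 + (7)*c^2) * (b^1*n^1) + ((-20)*c^1 + (11)*c^2) * (b^1*n^2) + ((1) + (-10)*c^1 + (8)*c^2) * (b^1*n^3) + ((-2)*c^1 + (3)*c^2) * (b^1*n^4) + ((-2) + (2)*c^1) * (b^2) + ((-6) + (4)*c^1) * (b^2*n^1) + ((-3) + (5)*c^1) * (b^2*n^2) + ((-1) + (3)*c^1) * (b^2*n^3) + ((1)) * (b^3*n^1) + ((1)) * (b^3*n^2) := by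
  have hc0 : (0:ℝ) ≤ c := by linarith
  have hcc : 2.7182*c ≤ c^2 := by nlinarith
  have hccc : 2.7182*c^2 ≤ c^3 := by nlinarith
  have h0 : 0 ≤ ((-2) + (-3)*c^1 + (1)*c^3) * (n^1) := by
    have : (0:ℝ) ≤ ((-2) + (-3)*c^1 + (1)*c^3) := by nlinarith [hcc, hccc, hc]
    exact mul_nonneg this (by positivity)
  have h1 : 0 ≤ ((1) + (-10)*c^1 + (-6)*c^2 + (5)*c^3) * (n^2) := by
    have : (0:ℝ) ≤ ((1) + (-10)*c^1 + (-6)*c^2 + (5)*c^3) := by nlinarith [hcc, hccc, hc]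
    exact mul_nonneg this (by positivity)
  have h2 : 0 ≤ ((1) + (-2)*c^1 + (-14)*c^2 + (7)*c^3) * (n^3) := by
    have : (0:ℝ) ≤ ((1) + (-2)*c^1 + (-14)*c^2 + (7)*c^3) := by nlinarith [hcc, hccc, hc]
    exact mul_nonneg this (by positivity)
  have h3 : 0 ≤ ((1)*c^1 + (-7)*c^2 + (4)*c^3) * (n^4) := by
    have : (0:ℝ) ≤ ((1)*c^1 + (-7)*c^2 + (4)*c^3) := by nlinarith [hcc, hccc, hc]
    exact mul_nonneg this (by positivity)
  have h4 : 0 ≤ ((-1)*c^2 + (1)*c^3) * (n^5) := by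
    have : (0:ℝ) ≤ ((-1)*c^2 + (1)*c^3) := by nlinarith [hcc, hccc, hc]
    exact mul_nonneg this (by positivity)
  have h5 : 0 ≤ ((-1) + (1)*c^2) * (b^1) := by
    have : (0:ℝ) ≤ ((-1) + (1)*c^2) := by nlinarith [hcc, hccc, hc]
    exact mul_nonneg this (by positivity)
  have h6 : 0 ≤ ((-6) + (-8)*c^1 + (7)*c^2) * (b^1*n^1) := by
    have : (0:ℝ) ≤ ((-6) + (-8)*c^1 + (7)*c^2) := by nlinarith [hcc, hccc, hc]
    exact mul_nonneg this (by positivity)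
  have h7 : 0 ≤ ((-20)*c^1 + (11)*c^2) * (b^1*n^2) := by
    have : (0:ℝ) ≤ ((-20)*c^1 + (11)*c^2) := by nlinarith [hcc, hccc, hc]
    exact mul_nonneg this (by positivity)
  have h8 : 0 ≤ ((1) + (-10)*c^1 + (8)*c^2) * (b^1*n^3) := by
    have : (0:ℝ) ≤ ((1) + (-10)*c^1 + (8)*c^2) := by nlinarith [hcc, hccc, hc]
    exact mul_nonneg this (by positivity)
  have h9 : 0 ≤ ((-2)*c^1 + (3)*c^2) * (b^1*n^4) := by
    have : (0:ℝ) ≤ ((-2)*c^1 + (3)*c^2) := by nlinarith [hcc, hccc, hc]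
    exact mul_nonneg this (by positivity)
  have h10 : 0 ≤ ((-2) + (2)*c^1) * (b^2) := by
    have : (0:ℝ) ≤ ((-2) + (2)*c^1) := by nlinarith [hcc, hccc, hc]
    exact mul_nonneg this (by positivity)
  have h11 : 0 ≤ ((-6) + (4)*c^1) * (b^2*n^1) := by
    have : (0:ℝ) ≤ ((-6) + (4)*c^1) := by nlinarith [hcc, hccc, hc]
    exact mul_nonneg this (by positivity)
  have h12 : 0 ≤ ((-3) + (5)*c^1) * (b^2*n^2) := by
    have : (0:ℝ) ≤ ((-3) + (5)*c^1) := by nlinarith [hcc, hccc, hc]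
    exact mul_nonneg this (by positivity)
  have h13 : 0 ≤ ((-1) + (3)*c^1) * (b^2*n^3) := by
    have : (0:ℝ) ≤ ((-1) + (3)*c^1) := by nlinarith [hcc, hccc, hc]
    exact mul_nonneg this (by positivity)
  have h14 : 0 ≤ ((1)) * (b^3*n^1) := by
    have : (0:ℝ) ≤ ((1)) := by nlinarith [hcc, hccc, hc]
    exact mul_nonneg this (by positivity)
  have h15 : 0 ≤ ((1)) * (b^3*n^2) := by
    have : (0:ℝ) ≤ ((1)) := by nlinarith [hcc, hccc, hc]
    exact mul_nonneg this (by positivity)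
  linarith

set_option maxHeartbeats 1000000 in
theorem F2nonneg (c ρ L s : ℝ) (hc : 2.7182 ≤ c) (hc2 : c ≤ 2.7183)
    (hρ : 1 ≤ ρ) (hs : s = ρ + c - 1) (hL : 1 ≤ L) (hLs : c*L ≤ s) :
    0 ≤ 2*ρ*s^2*L^3 - (1+ρ)*s^2*L^3 + 2*ρ^2*s*L^2 - (1+ρ)*(L+1)*ρ^2*L
      + (L+2)*ρ^2 - 2*ρ^2*s*L^3 + ρ^3*L^3 := by
  have h := sumNonneg c (s - c*L) (L-1) hc hc2 (by linarith) (by linarith)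
  have heq : 2*ρ*s^2*L^3 - (1+ρ)*s^2*L^3 + 2*ρ^2*s*L^2 - (1+ρ)*(L+1)*ρ^2*L
      + (L+2)*ρ^2 - 2*ρ^2*s*L^3 + ρ^3*L^3 = ((-2) + (-3)*c^1 + (1)*c^3) * ((L-1)^1) + ((1) + (-10)*c^1 + (-6)*c^2 + (5)*c^3) * ((L-1)^2) + ((1) + (-2)*c^1 + (-14)*c^2 + (7)*c^3) * ((L-1)^3) + ((1)*c^1 + (-7)*c^2 + (4)*c^3) * ((L-1)^4) + ((-1)*c^2 + (1)*c^3) * ((L-1)^5) + ((-1) + (1)*c^2) * ((s - c*L)^1) + ((-6) + (-8)*c^1 + (7)*c^2) * ((s - c*L)^1*(L-1)^1) + ((-20)*c^1 + (11)*c^2) * ((s - c*L)^1*(L-1)^2) + ((1) + (-10)*c^1 + (8)*c^2) * ((s - c*L)^1*(L-1)^3) + ((-2)*c^1 + (3)*c^2) * ((s - c*L)^1*(L-1)^4) + ((-2) + (2)*c^1) * ((s - c*L)^2) + ((-6) + (4)*c^1) * ((s - c*L)^2*(L-1)^1) + ((-3) + (5)*c^1) * ((s - c*L)^2*(L-1)^2)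 + ((-1) + (3)*c^1) * ((s - c*L)^2*(L-1)^3) + ((1)) * ((s - c*L)^3*(L-1)^1) + ((1)) * ((s - c*L)^3*(L-1)^2) := by
    subst hs; ring
  linarith [h, heq.ge, heq.le]

noncomputable def sf (t : ℝ) : ℝ := t + (Real.exp 1 - 1)
noncomputable def Lf (t : ℝ) : ℝ := Real.log (sf t)
noncomputable def Ff (t : ℝ) : ℝ :=
  (1+t)*(Real.log t + Real.log (Lf t)) + 1 + (Lf t)⁻¹ - t*Lf t - t
noncomputable def F1f (t : ℝ) : ℝ :=
  Real.log t + Real.log (Lf t) + (1+t)*(t⁻¹ + (Lf t)⁻¹*(sf t)⁻¹)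
    - (sf t)⁻¹*((Lf t)^2)⁻¹ - Lf t - t*(sf t)⁻¹ - 1
noncomputable def F2f (t : ℝ) : ℝ :=
  2*t⁻¹ - (1+t)*(t^2)⁻¹ + 2*((sf t)*(Lf t))⁻¹ - (1+t)*(Lf t+1)*((sf t)^2*(Lf t)^2)⁻¹
    + (Lf t+2)*((sf t)^2*(Lf t)^3)⁻¹ - 2*(sf t)⁻¹ + t*((sf t)^2)⁻¹

lemma exp_one_le_sf {t : ℝ} (ht : 1 ≤ t) : Real.exp 1 ≤ sf t := by
  unfold sf; linarith

lemma sf_pos {t : ℝ} (ht : 1 ≤ t) : 0 < sf t :=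
  lt_of_lt_of_le (Real.exp_pos 1) (exp_one_le_sf ht)

lemma one_le_Lf {t : ℝ} (ht : 1 ≤ t) : 1 ≤ Lf t := by
  have h := Real.log_le_log (Real.exp_pos 1) (exp_one_le_sf ht)
  rwa [Real.log_exp] at h

lemma Lf_pos {t : ℝ} (ht : 1 ≤ t) : 0 < Lf t := lt_of_lt_of_le one_pos (one_le_Lf ht)

lemma exp_mul_Lf_le {t : ℝ} (ht : 1 ≤ t) : Real.exp 1 * Lf t ≤ sf t := by
  have hs := sf_pos ht
  have he := Real.exp_pos 1
  have h1 : 0 < sf t / Real.exp 1 := by positivity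
  have h2 : Real.log (sf t / Real.exp 1) ≤ sf t / Real.exp 1 - 1 :=
    Real.log_le_sub_one_of_pos h1
  rw [Real.log_div (ne_of_gt hs) (ne_of_gt he), Real.log_exp] at h2
  have : Lf t ≤ sf t / Real.exp 1 := by unfold Lf; linarith
  calc Real.exp 1 * Lf t ≤ Real.exp 1 * (sf t / Real.exp 1) :=
        mul_le_mul_of_nonneg_left this he.le
    _ = sf t := by field_simp

lemma hasDeriv_sf (t : ℝ) : HasDerivAt sf 1 t := by
  unfold sf
  simpa using (hasDerivAt_id t).add_const (Real.exp 1 - 1)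

lemma hasDeriv_Lf {t : ℝ} (ht : 1 ≤ t) : HasDerivAt Lf ((sf t)⁻¹) t := by
  have := (hasDeriv_sf t).log (ne_of_gt (sf_pos ht))
  show HasDerivAt (fun y => Real.log (sf y)) _ t
  simpa using this

lemma hasDeriv_Ff {t : ℝ} (ht : 1 ≤ t) : HasDerivAt Ff (F1f t) t := by
  have ht0 : (0:ℝ) < t := lt_of_lt_of_le one_pos ht
  have hs0 := ne_of_gt (sf_pos ht)
  have hL0 := ne_of_gt (Lf_pos ht)
  have t1 : HasDerivAt (fun u : ℝ => Real.log u) t⁻¹ t := Real.hasDerivAt_log (ne_of_gt ht0)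
  have t2 : HasDerivAt (fun u : ℝ => Real.log (Lf u)) ((sf t)⁻¹ / Lf t) t :=
    (hasDeriv_Lf ht).log hL0
  have t3 : HasDerivAt (fun u : ℝ => 1 + u) 1 t := by
    simpa using (hasDerivAt_id t).const_add (1:ℝ)
  have t5 : HasDerivAt (fun u : ℝ => (Lf u)⁻¹) (-(sf t)⁻¹ / Lf t ^ 2) t :=
    (hasDeriv_Lf ht).inv hL0
  have big : HasDerivAt Ff
      (1 * (Real.log t + Real.log (Lf t)) + (1+t) * (t⁻¹ + (sf t)⁻¹ / Lf t)
        + (-(sf t)⁻¹ / Lf t ^ 2) - (1 * Lf t + t * (sf t)⁻¹) - 1) t := by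
    exact ((((t3.mul (t1.add t2)).add_const 1).add t5).sub
      ((hasDerivAt_id t).mul (hasDeriv_Lf ht))).sub (hasDerivAt_id t)
  have heq : 1 * (Real.log t + Real.log (Lf t)) + (1+t) * (t⁻¹ + (sf t)⁻¹ / Lf t)
        + (-(sf t)⁻¹ / Lf t ^ 2) - (1 * Lf t + t * (sf t)⁻¹) - 1 = F1f t := by
    unfold F1f; field_simp; ring
  rwa [heq] at big

lemma hasDeriv_F1f {t : ℝ} (ht : 1 ≤ t) : HasDerivAt F1f (F2f t) t := by
  have ht0 : (0:ℝ) < t := lt_of_lt_of_le one_pos ht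
  have hs0 := ne_of_gt (sf_pos ht)
  have hL0 := ne_of_gt (Lf_pos ht)
  have t1 : HasDerivAt (fun u : ℝ => Real.log u) t⁻¹ t := Real.hasDerivAt_log (ne_of_gt ht0)
  have t2 : HasDerivAt (fun u : ℝ => Real.log (Lf u)) ((sf t)⁻¹ / Lf t) t :=
    (hasDeriv_Lf ht).log hL0
  have t3 : HasDerivAt (fun u : ℝ => 1 + u) 1 t := by
    simpa using (hasDerivAt_id t).const_add (1:ℝ)
  have t4 : HasDerivAt (fun u : ℝ => u⁻¹) (-(t^2)⁻¹) t := hasDerivAt_inv (ne_of_gt ht0)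
  have t5 : HasDerivAt (fun u : ℝ => (Lf u)⁻¹) (-(sf t)⁻¹ / Lf t ^ 2) t :=
    (hasDeriv_Lf ht).inv hL0
  have t6 : HasDerivAt (fun u : ℝ => (sf u)⁻¹) (-1 / sf t ^ 2) t :=
    (hasDeriv_sf t).inv hs0
  have t7 : HasDerivAt (fun u : ℝ => (Lf u)⁻¹ * (sf u)⁻¹)
      ((-(sf t)⁻¹ / Lf t ^ 2) * (sf t)⁻¹ + (Lf t)⁻¹ * (-1 / sf t ^ 2)) t := t5.mul t6
  have t9 : HasDerivAt (fun u : ℝ => ((Lf u)^2)⁻¹)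
      (-(2 * Lf t ^ 1 * (sf t)⁻¹) / (Lf t ^ 2) ^ 2) t :=
    ((hasDeriv_Lf ht).pow 2).inv (pow_ne_zero 2 hL0)
  have t10 : HasDerivAt (fun u : ℝ => (sf u)⁻¹ * ((Lf u)^2)⁻¹)
      ((-1 / sf t ^ 2) * ((Lf t)^2)⁻¹ + (sf t)⁻¹ * (-(2 * Lf t ^ 1 * (sf t)⁻¹) / (Lf t ^ 2) ^ 2)) t :=
    t6.mul t9
  have t11 : HasDerivAt (fun u : ℝ => u * (sf u)⁻¹)
      (1 * (sf t)⁻¹ + t * (-1 / sf t ^ 2)) t := (hasDerivAt_id t).mul t6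
  have big : HasDerivAt F1f
      (t⁻¹ + (sf t)⁻¹ / Lf t + (1 * (t⁻¹ + (Lf t)⁻¹ * (sf t)⁻¹)
        + (1+t) * (-(t^2)⁻¹ + ((-(sf t)⁻¹ / Lf t ^ 2) * (sf t)⁻¹ + (Lf t)⁻¹ * (-1 / sf t ^ 2))))
        - ((-1 / sf t ^ 2) * ((Lf t)^2)⁻¹ + (sf t)⁻¹ * (-(2 * Lf t ^ 1 * (sf t)⁻¹) / (Lf t ^ 2) ^ 2))
        - (sf t)⁻¹ - (1 * (sf t)⁻¹ + t * (-1 / sf t ^ 2))) t := by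
    exact (((((t1.add t2).add (t3.mul (t4.add t7))).sub t10).sub (hasDeriv_Lf ht)).sub t11).sub_const 1
  have heq : t⁻¹ + (sf t)⁻¹ / Lf t + (1 * (t⁻¹ + (Lf t)⁻¹ * (sf t)⁻¹)
        + (1+t) * (-(t^2)⁻¹ + ((-(sf t)⁻¹ / Lf t ^ 2) * (sf t)⁻¹ + (Lf t)⁻¹ * (-1 / sf t ^ 2))))
        - ((-1 / sf t ^ 2) * ((Lf t)^2)⁻¹ + (sf t)⁻¹ * (-(2 * Lf t ^ 1 * (sf t)⁻¹) / (Lf t ^ 2) ^ 2))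
        - (sf t)⁻¹ - (1 * (sf t)⁻¹ + t * (-1 / sf t ^ 2)) = F2f t := by
    unfold F2f; field_simp; ring
  rwa [heq] at big

lemma F2f_nonneg {t : ℝ} (ht : 1 ≤ t) : 0 ≤ F2f t := by
  have hE1 : (2.7182:ℝ) ≤ Real.exp 1 := by
    have := Real.exp_one_gt_d9; norm_num at this ⊢; linarith
  have hE2 : Real.exp 1 ≤ (2.7183:ℝ) := by
    have := Real.exp_one_lt_d9; norm_num at this ⊢; linarith
  have hs : sf t = t + Real.exp 1 - 1 := by unfold sf; ring
  have h := F2nonneg (Real.exp 1) t (Lf t) (sf t) hE1 hE2 ht hs (one_le_Lf ht)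
    (exp_mul_Lf_le ht)
  have ht0 : (0:ℝ) < t := lt_of_lt_of_le one_pos ht
  have hs0 := sf_pos ht
  have hL0 := Lf_pos ht
  have heq : F2f t * (t^2 * sf t^2 * Lf t^3) =
      2*t*(sf t)^2*(Lf t)^3 - (1+t)*(sf t)^2*(Lf t)^3 + 2*t^2*(sf t)*(Lf t)^2
        - (1+t)*(Lf t+1)*t^2*(Lf t) + (Lf t+2)*t^2 - 2*t^2*(sf t)*(Lf t)^3 + t^3*(Lf t)^3 := by
    unfold F2f; field_simp
  have hdpos : (0:ℝ) < t^2 * sf t^2 * Lf t^3 := by positivity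
  have := (mul_nonneg_iff_of_pos_right hdpos).mp (by rw [heq]; linarith)
  exact this

lemma F1f_one : F1f 1 = 0 := by
  have h : sf 1 = Real.exp 1 := by unfold sf; ring
  unfold F1f Lf
  rw [h, Real.log_exp]
  simp
  ring

lemma Ff_one : Ff 1 = 0 := by
  have h : sf 1 = Real.exp 1 := by unfold sf; ring
  unfold Ff Lf
  rw [h, Real.log_exp]
  simp

lemma nonneg_of_deriv (f f' : ℝ → ℝ) (hd : ∀ t, 1 ≤ t → HasDerivAt f (f' t) t)
    (h0 : f 1 = 0) (hder : ∀ t, 1 ≤ t → 0 ≤ f' t) {x : ℝ} (hx : 1 ≤ x) : 0 ≤ f x := by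
  have hmono : MonotoneOn f (Set.Ici 1) := by
    apply monotoneOn_of_deriv_nonneg (convex_Ici 1)
    · exact fun t ht => ((hd t ht).continuousAt).continuousWithinAt
    · intro t ht
      rw [interior_Ici] at ht
      exact ((hd t ht.le).differentiableAt).differentiableWithinAt
    · intro t ht
      rw [interior_Ici] at ht
      rw [(hd t ht.le).deriv]
      exact hder t ht.le
  have h := hmono Set.self_mem_Ici hx hx
  linarith [h0 ▸ h]

lemma F1f_nonneg {x : ℝ} (hx : 1 ≤ x) : 0 ≤ F1f x :=
  nonneg_of_deriv F1f F2f (fun t ht => hasDeriv_F1f ht) F1f_one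
    (fun t ht => F2f_nonneg ht) hx

lemma Ff_nonneg {x : ℝ} (hx : 1 ≤ x) : 0 ≤ Ff x :=
  nonneg_of_deriv Ff F1f (fun t ht => hasDeriv_Ff ht) Ff_one
    (fun t ht => F1f_nonneg ht) hx

lemma g_nonneg {ρ x : ℝ} (hρ : 1 ≤ ρ) (hx : 1 ≤ x) (hxle : x ≤ ρ * Lf ρ) :
    0 ≤ (1+ρ)*Real.log x + 1 + ρ*x⁻¹ - x - ρ := by
  set g : ℝ → ℝ := fun u => (1+ρ)*Real.log u + 1 + ρ*u⁻¹ - u - ρ with hg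
  have hgd : ∀ t : ℝ, 0 < t → HasDerivAt g ((1+ρ)*t⁻¹ + ρ*(-(t^2)⁻¹) - 1) t := by
    intro t ht0
    have t1 : HasDerivAt (fun u : ℝ => Real.log u) t⁻¹ t := Real.hasDerivAt_log (ne_of_gt ht0)
    have t2 : HasDerivAt (fun u : ℝ => u⁻¹) (-(t^2)⁻¹) t := hasDerivAt_inv (ne_of_gt ht0)
    exact ((((t1.const_mul (1+ρ)).add_const 1).add (t2.const_mul ρ)).sub
        (hasDerivAt_id' t)).sub_const ρ
  have hg1 : g 1 = 0 := by simp [hg]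
  rcases le_or_gt x ρ with hcase | hcase
  · -- monotone on [1, ρ]
    have hmono : MonotoneOn g (Set.Icc 1 ρ) := by
      apply monotoneOn_of_deriv_nonneg (convex_Icc 1 ρ)
      · intro t ht
        exact ((hgd t (by linarith [ht.1] : (0:ℝ) < t)).continuousAt).continuousWithinAt
      · intro t ht
        rw [interior_Icc] at ht
        exact ((hgd t (by linarith [ht.1])).differentiableAt).differentiableWithinAt
      · intro t ht
        rw [interior_Icc] at ht
        have ht0 : (0:ℝ) < t := by linarith [ht.1]
        rw [(hgd t ht0).deriv]
        have key : (1+ρ)*t⁻¹ + ρ*(-(t^2)⁻¹) - 1 = (t-1)*(ρ-t)/t^2 := by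
          field_simp; ring
        rw [key]
        have : 0 ≤ (t-1)*(ρ-t) := mul_nonneg (by linarith [ht.1]) (by linarith [ht.2])
        positivity
    have h := hmono (Set.mem_Icc.mpr ⟨le_refl 1, hρ⟩) (Set.mem_Icc.mpr ⟨hx, hcase⟩) hx
    have hx' : (1+ρ)*Real.log x + 1 + ρ*x⁻¹ - x - ρ = g x := rfl
    rw [hx']
    linarith [hg1 ▸ h]
  · -- antitone on [ρ, ρ*Lf ρ], bound by g (ρ*Lf ρ) = Ff ρ ≥ 0
    have hL1 : 1 ≤ Lf ρ := one_le_Lf hρ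
    have hρ0 : (0:ℝ) < ρ := by linarith
    have hL0 : (0:ℝ) < Lf ρ := Lf_pos hρ
    have hanti : AntitoneOn g (Set.Icc ρ (ρ * Lf ρ)) := by
      apply antitoneOn_of_deriv_nonpos (convex_Icc ρ (ρ * Lf ρ))
      · intro t ht
        exact ((hgd t (by linarith [ht.1] : (0:ℝ) < t)).continuousAt).continuousWithinAt
      · intro t ht
        rw [interior_Icc] at ht
        exact ((hgd t (by linarith [ht.1])).differentiableAt).differentiableWithinAt
      · intro t ht
        rw [interior_Icc] at ht
        have ht0 : (0:ℝ) < t := by linarith [ht.1]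
        rw [(hgd t ht0).deriv]
        have key : (1+ρ)*t⁻¹ + ρ*(-(t^2)⁻¹) - 1 = -((t-1)*(t-ρ))/t^2 := by
          field_simp; ring
        rw [key]
        have h1 : 0 ≤ (t-1)*(t-ρ) := mul_nonneg (by nlinarith [ht.1]) (by linarith [ht.1])
        have h2 : (0:ℝ) < t^2 := by positivity
        exact div_nonpos_of_nonpos_of_nonneg (by linarith) h2.le
    have hmem1 : x ∈ Set.Icc ρ (ρ * Lf ρ) := Set.mem_Icc.mpr ⟨hcase.le, hxle⟩
    have hmem2 : ρ * Lf ρ ∈ Set.Icc ρ (ρ * Lf ρ) :=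
      Set.mem_Icc.mpr ⟨le_mul_of_one_le_right hρ0.le hL1, le_refl _⟩
    have h := hanti hmem1 hmem2 hxle
    have hgF : g (ρ * Lf ρ) = Ff ρ := by
      simp only [hg, Ff]
      rw [Real.log_mul (ne_of_gt hρ0) (ne_of_gt hL0)]
      field_simp
    have hFf := Ff_nonneg hρ
    rw [hgF] at h
    have hx' : (1+ρ)*Real.log x + 1 + ρ*x⁻¹ - x - ρ = g x := rfl
    rw [hx']
    linarith

/-- Reverse derivative magnitude dominates forward derivative magnitude. -/
theorem reverse_dominates_forward (p q P Q ρ : ℝ)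
    (hp : 0 < p) (hq : 0 < q) (hP : 0 < P) (hQ : 0 < Q)
    (hρ : 1 < ρ) (hPQ : P = ρ * Q)
    (r : ℝ) (hr : r = Real.log (p / q)) (hr0 : 0 < r)
    (hr1 : r ≤ Real.log ρ + Real.log (Real.log (ρ + (Real.exp 1 - 1)))) :
    |Real.log (p / q)| * Q + |Real.log (q / p)| * P
      ≥ |1 - p / q| * Q + |1 - q / p| * P := by
  set x := p / q with hx
  have hx0 : 0 < x := div_pos hp hq
  have hx1 : 1 < x := by
    have hlogpos : 0 < Real.log x := hr ▸ hr0
    exact (Real.log_pos_iff hx0.le).mp hlogpos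
  have hρ0 : (0:ℝ) < ρ := by linarith
  have hL0 : (0:ℝ) < Lf ρ := Lf_pos hρ.le
  have hqp : q / p = x⁻¹ := by rw [hx, inv_div]
  have hxle : x ≤ ρ * Lf ρ := by
    have hlog : Real.log x ≤ Real.log (ρ * Lf ρ) := by
      rw [Real.log_mul (ne_of_gt hρ0) (ne_of_gt hL0)]
      rw [← hr]
      unfold Lf sf
      exact hr1
    have hρL0 : (0:ℝ) < ρ * Lf ρ := by positivity
    exact (Real.log_le_log_iff hx0 hρL0).mp hlog
  have hg := g_nonneg hρ.le hx1.le hxle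
  have habs1 : |Real.log x| = Real.log x := abs_of_pos (by rw [← hr]; exact hr0)
  have habs2 : |Real.log (q/p)| = Real.log x := by
    rw [hqp, Real.log_inv, abs_neg, habs1]
  have habs3 : |1 - x| = x - 1 := by
    rw [abs_sub_comm]; exact abs_of_pos (by linarith)
  have habs4 : |1 - x⁻¹| = 1 - x⁻¹ := by
    apply abs_of_nonneg
    have : x⁻¹ ≤ 1 := by
      rw [inv_le_one_iff₀]; right; exact hx1.le
    linarith
  rw [habs1, habs2, hqp, habs3, habs4, hPQ]
  nlinarith [mul_nonneg hQ.le hg]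
end

section
/- Let l(ρ) = (ρ + 1)(log ρ + log(log(ρ + e − 1))) − ρ(log(ρ + e − 1) + 1) + (log(ρ + e − 1))^{−1} + 1. Then l(ρ) ≥ 0 for all ρ ≥ 1. -/
set_option maxHeartbeats 2000000


private lemma trap (y : ℝ) (hy : 1 ≤ y) : Real.log y ≤ (y^2 - 1)/(2*y) := by
  have h0 : (0:ℝ) < y := lt_of_lt_of_le one_pos hy
  rcases eq_or_lt_of_le hy with h | h
  · rw [← h]; norm_num
  · have hs : Real.log y < Real.sinh (Real.log y) :=
      Real.self_lt_sinh_iff.2 (Real.log_pos h)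
    rw [Real.sinh_eq, Real.exp_log h0, Real.exp_neg, Real.exp_log h0] at hs
    have heq : (y - y⁻¹)/2 = (y^2 - 1)/(2*y) := by
      field_simp
    linarith [hs, heq]

private lemma pade_lower (x : ℝ) (hx : 1 ≤ x) :
    3*(x^2-1)/(x^2+4*x+1) ≤ Real.log x := by
  set f : ℝ → ℝ := fun t => Real.log t - 3*(t^2-1)/(t^2+4*t+1) with hf
  have hder : ∀ t : ℝ, 0 < t → HasDerivAt f
      (t⁻¹ - (6*t*(t^2+4*t+1) - 3*(t^2-1)*(2*t+4))/(t^2+4*t+1)^2) t := by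
    intro t ht0
    have hd : (t^2+4*t+1) ≠ 0 := by nlinarith
    have h1 : HasDerivAt (fun s:ℝ => 3*(s^2-1)) (6*t) t := by
      have h := ((hasDerivAt_pow 2 t).sub_const (1:ℝ)).const_mul (3:ℝ)
      exact h.congr_deriv (by norm_num; ring)
    have h2 : HasDerivAt (fun s:ℝ => s^2+4*s+1) (2*t+4) t := by
      have h := ((hasDerivAt_pow 2 t).add ((hasDerivAt_id t).const_mul (4:ℝ))).add_const (1:ℝ)
      exact h.congr_deriv (by norm_num)
    exact (Real.hasDerivAt_log (ne_of_gt ht0)).sub (h1.div h2 hd)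
  have hmono : MonotoneOn f (Set.Ici 1) := by
    apply monotoneOn_of_deriv_nonneg (convex_Ici 1)
    · intro t ht
      have ht0 : (0:ℝ) < t := lt_of_lt_of_le one_pos ht
      exact ((hder t ht0).continuousAt).continuousWithinAt
    · intro t ht
      rw [interior_Ici] at ht
      have ht0 : (0:ℝ) < t := lt_trans one_pos ht
      exact ((hder t ht0).differentiableAt).differentiableWithinAt
    · intro t ht
      rw [interior_Ici] at ht
      have ht1 : (1:ℝ) < t := ht
      have ht0 : (0:ℝ) < t := lt_trans one_pos ht1
      rw [(hder t ht0).deriv]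
      have hden : (0:ℝ) < t^2+4*t+1 := by nlinarith
      have hpos : (0:ℝ) < t*(t^2+4*t+1)^2 := mul_pos ht0 (pow_pos hden 2)
      have hident : t⁻¹ - (6*t*(t^2+4*t+1) - 3*(t^2-1)*(2*t+4))/(t^2+4*t+1)^2
          = (t-1)^4/(t*(t^2+4*t+1)^2) := by
        field_simp
        ring
      rw [hident]
      exact div_nonneg (by positivity) hpos.le
  have h1 := hmono Set.self_mem_Ici (Set.mem_Ici.2 hx) hx
  have hf1 : f 1 = 0 := by simp [hf]
  rw [hf1] at h1
  simp only [hf] at h1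
  linarith [h1]

private lemma pade_div (a b : ℝ) (hb : 0 < b) (hab : b ≤ a) :
    3*(a^2-b^2)/(a^2+4*a*b+b^2) ≤ Real.log (a/b) := by
  have ha : (0:ℝ) < a := lt_of_lt_of_le hb hab
  have h1 : (1:ℝ) ≤ a/b := (one_le_div hb).2 hab
  have h2 := pade_lower (a/b) h1
  have hab0 : (0:ℝ) < a/b := div_pos ha hb
  have hden1 : ((a/b)^2+4*(a/b)+1) ≠ 0 := by nlinarith [sq_nonneg (a/b)]
  have hden2 : (a^2+4*a*b+b^2) ≠ 0 := by nlinarith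
  have heq : 3*((a/b)^2-1)/((a/b)^2+4*(a/b)+1) = 3*(a^2-b^2)/(a^2+4*a*b+b^2) := by
    rw [div_eq_div_iff hden1 hden2]
    field_simp
  rw [heq] at h2
  exact h2

private lemma reduce (ρ L u P1 : ℝ) (hρ : 1 ≤ ρ) (hL1 : 1 ≤ L) (hLu : L ≤ u)
    (hp1 : P1 ≤ Real.log ρ)
    (hkey : 0 ≤ (1+ρ)*(P1 + 3*(u^2-1)/(u^2+4*u+1)) + 1 - ρ + 1/u - ρ*u) :
    0 ≤ (ρ+1)*(Real.log ρ + Real.log L) - ρ*(L+1) + 1/L + 1 := by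
  have hL0 : (0:ℝ) < L := lt_of_lt_of_le one_pos hL1
  have hu1 : (1:ℝ) ≤ u := le_trans hL1 hLu
  have hu0 : (0:ℝ) < u := lt_of_lt_of_le one_pos hu1
  have htr := trap (u/L) ((one_le_div hL0).2 hLu)
  rw [Real.log_div hu0.ne' hL0.ne'] at htr
  have heq : ((u/L)^2 - 1)/(2*(u/L)) = (u^2 - L^2)/(2*u*L) := by
    rw [div_eq_div_iff (by positivity) (by positivity)]
    field_simp
  rw [heq] at htr
  have hbra : 0 ≤ 2*(u-L) + 2*ρ*u*L*(u-L) - (1+ρ)*(u^2-L^2) := by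
    nlinarith [mul_nonneg (mul_nonneg (sub_nonneg.2 hLu) (sub_nonneg.2 hρ))
        (mul_nonneg hu0.le (sub_nonneg.2 hL1)),
      mul_nonneg (mul_nonneg (sub_nonneg.2 hLu) (sub_nonneg.2 hρ))
        (mul_nonneg hL0.le (sub_nonneg.2 hu1)),
      mul_nonneg (mul_nonneg (sub_nonneg.2 hLu) (sub_nonneg.2 hu1)) (sub_nonneg.2 hL1)]
  have h2uL : (0:ℝ) < 2*u*L := by nlinarith
  have hident : 1/L - 1/u + ρ*(u-L) - (1+ρ)*((u^2-L^2)/(2*u*L))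
      = (2*(u-L) + 2*ρ*u*L*(u-L) - (1+ρ)*(u^2-L^2))/(2*u*L) := by
    field_simp
  have hfrac : (1+ρ)*(Real.log u - Real.log L) ≤ 1/L - 1/u + ρ*(u-L) := by
    have hm := mul_le_mul_of_nonneg_left htr (show (0:ℝ) ≤ 1+ρ by linarith)
    have hdn := div_nonneg hbra h2uL.le
    linarith [hm, hdn, hident]
  have hp2 := pade_lower u hu1
  have hp1' := mul_le_mul_of_nonneg_left hp1 (show (0:ℝ) ≤ 1+ρ by linarith)
  have hp2' := mul_le_mul_of_nonneg_left hp2 (show (0:ℝ) ≤ 1+ρ by linarith)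
  nlinarith [hfrac, hp1', hp2', hkey]

private lemma trap_div (a b : ℝ) (hb : 0 < b) (hab : b ≤ a) :
    Real.log (a/b) ≤ (a^2 - b^2)/(2*a*b) := by
  have ha : (0:ℝ) < a := lt_of_lt_of_le hb hab
  have h1 : (1:ℝ) ≤ a/b := (one_le_div hb).2 hab
  have h2 := trap (a/b) h1
  have hd1 : (0:ℝ) < 2*(a/b) := by
    have := div_pos ha hb; linarith
  have hd2 : (0:ℝ) < 2*a*b := by positivity
  have heq : ((a/b)^2 - 1)/(2*(a/b)) = (a^2-b^2)/(2*a*b) := by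
    rw [div_eq_div_iff hd1.ne' hd2.ne']
    field_simp
  linarith [h2, heq]


lemma keyA (ρ : ℝ) (h1 : 1 ≤ ρ) (h2 : ρ ≤ 5/2) :
    0 ≤ (1+ρ)*((3*(ρ^2-1)/(ρ^2+4*ρ+1)) + 3*(((ρ-1)^2 + 4*2.7182818*(ρ-1) + 2*2.7182818^2)^2-(2*2.7182818*(ρ-1) + 2*2.7182818^2)^2)/(((ρ-1)^2 + 4*2.7182818*(ρ-1) + 2*2.7182818^2)^2 + 4*((ρ-1)^2 + 4*2.7182818*(ρ-1) + 2*2.7182818^2)*(2*2.7182818*(ρ-1) + 2*2.7182818^2) + (2*2.7182818*(ρ-1) + 2*2.7182818^2)^2)) + 1 - ρ + (2*2.7182818*(ρ-1) + 2*2.7182818^2)/((ρ-1)^2 + 4*2.7182818*(ρ-1) + 2*2.7182818^2) - ρ*((ρ-1)^2 + 4*2.7182818*(ρ-1) + 2*2.7182818^2)/(2*2.7182818*(ρ-1) + 2*2.7182818^2) := by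
  have hNu : (0:ℝ) < ((ρ-1)^2 + 4*2.7182818*(ρ-1) + 2*2.7182818^2) := by nlinarith [sq_nonneg (ρ-1)]
  have hDu : (0:ℝ) < (2*2.7182818*(ρ-1) + 2*2.7182818^2) := by nlinarith
  have hQQ : (0:ℝ) < (((ρ-1)^2 + 4*2.7182818*(ρ-1) + 2*2.7182818^2)^2 + 4*((ρ-1)^2 + 4*2.7182818*(ρ-1) + 2*2.7182818^2)*(2*2.7182818*(ρ-1) + 2*2.7182818^2) + (2*2.7182818*(ρ-1) + 2*2.7182818^2)^2) := by nlinarith [mul_pos hNu hDu, mul_pos hNu hNu, mul_pos hDu hDu]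
  have hB1 : (0:ℝ) < ρ^2+4*ρ+1 := by nlinarith
  have hB1h : (0:ℝ) < (ρ/2)^2+4*(ρ/2)+1 := by nlinarith
  have hD : (0:ℝ) < (ρ^2+4*ρ+1) * (((ρ-1)^2 + 4*2.7182818*(ρ-1) + 2*2.7182818^2)^2 + 4*((ρ-1)^2 + 4*2.7182818*(ρ-1) + 2*2.7182818^2)*(2*2.7182818*(ρ-1) + 2*2.7182818^2) + (2*2.7182818*(ρ-1) + 2*2.7182818^2)^2) * ((ρ-1)^2 + 4*2.7182818*(ρ-1) + 2*2.7182818^2) * (2*2.7182818*(ρ-1) + 2*2.7182818^2) := by positivity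
  have hx : (0:ℝ) ≤ ρ-1 := by linarith
  have hy : (0:ℝ) ≤ 5/2-ρ := by linarith
  have hC : (0:ℝ) ≤ ((575720754003894532178888268395108768651747359106716059521:ℝ)/104284286499023437500000000000000000000000000000000000) * (ρ-1)^3 * (5/2-ρ)^8 + ((781950686188406012169462140394282328112823657964791684521:ℝ)/13035535812377929687500000000000000000000000000000000) * (ρ-1)^4 * (5/2-ρ)^7 + ((7344331037091388223519384661896887332680696639947571166647:ℝ)/26071071624755859375000000000000000000000000000000000) * (ρ-1)^5 * (5/2-ρ)^6 + ((9724238214367386650093709906179553693671548053829100541647:ℝ)/13035535812377929687500000000000000000000000000000000) * (ρ-1)^6 * (5/2-ρ)^5 + ((12688997316392823054680175850686920327386343284898129916647:ℝ)/10428428649902343750000000000000000000000000000000000) * (ρ-1)^7 * (5/2-ρ)^4 + ((16292695346412820335647444551269618704886605770654659291647:ℝ)/13035535812377929687500000000000000000000000000000000) * (ρ-1)^8 * (5/2-ρ)^3 + ((20545072968423285684435856059073892601921358948598688666647:ℝ)/26071071624755859375000000000000000000000000000000000) * (ρ-1)^9 * (5/2-ρ)^2 + ((3625449949013080392988866430377664125739589465175745434521:ℝ)/13035535812377929687500000000000000000000000000000000)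 * (ρ-1)^10 * (5/2-ρ)^1 + ((4371259343576227392956754566621519038361133018721321059521:ℝ)/104284286499023437500000000000000000000000000000000000) * (ρ-1)^11 := (add_nonneg (add_nonneg (add_nonneg (add_nonneg (add_nonneg (add_nonneg (add_nonneg (add_nonneg (mul_nonneg (mul_nonneg (by norm_num : (0:ℝ) ≤ (575720754003894532178888268395108768651747359106716059521:ℝ)/104284286499023437500000000000000000000000000000000000) (pow_nonneg hx 3)) (pow_nonneg hy 8)) (mul_nonneg (mul_nonneg (by norm_num : (0:ℝ) ≤ (781950686188406012169462140394282328112823657964791684521:ℝ)/13035535812377929687500000000000000000000000000000000) (pow_nonneg hx 4)) (pow_nonneg hy 7))) (mul_nonneg (mul_nonneg (by norm_num : (0:ℝ) ≤ (7344331037091388223519384661896887332680696639947571166647:ℝ)/26071071624755859375000000000000000000000000000000000) (pow_nonneg hx 5)) (pow_nonneg hy 6))) (mul_nonneg (mul_nonneg (by norm_num : (0:ℝ) ≤ (9724238214367386650093709906179553693671548053829100541647:ℝ)/13035535812377929687500000000000000000000000000000000) (pow_nonneg hx 6)) (pow_nonneg hy 5))) (mul_nonneg (mul_nonneg (by norm_num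 : (0:ℝ) ≤ (12688997316392823054680175850686920327386343284898129916647:ℝ)/10428428649902343750000000000000000000000000000000000) (pow_nonneg hx 7)) (pow_nonneg hy 4))) (mul_nonneg (mul_nonneg (by norm_num : (0:ℝ) ≤ (16292695346412820335647444551269618704886605770654659291647:ℝ)/13035535812377929687500000000000000000000000000000000) (pow_nonneg hx 8)) (pow_nonneg hy 3))) (mul_nonneg (mul_nonneg (by norm_num : (0:ℝ) ≤ (20545072968423285684435856059073892601921358948598688666647:ℝ)/26071071624755859375000000000000000000000000000000000) (pow_nonneg hx 9)) (pow_nonneg hy 2))) (mul_nonneg (mul_nonneg (by norm_num : (0:ℝ) ≤ (3625449949013080392988866430377664125739589465175745434521:ℝ)/13035535812377929687500000000000000000000000000000000) (pow_nonneg hx 10)) (pow_nonneg hy 1))) (mul_nonneg (by norm_num : (0:ℝ) ≤ (4371259343576227392956754566621519038361133018721321059521:ℝ)/104284286499023437500000000000000000000000000000000000) (pow_nonneg hx 11)))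
  have hid : (1+ρ)*((3*(ρ^2-1)/(ρ^2+4*ρ+1)) + 3*(((ρ-1)^2 + 4*2.7182818*(ρ-1) + 2*2.7182818^2)^2-(2*2.7182818*(ρ-1) + 2*2.7182818^2)^2)/(((ρ-1)^2 + 4*2.7182818*(ρ-1) + 2*2.7182818^2)^2 + 4*((ρ-1)^2 + 4*2.7182818*(ρ-1) + 2*2.7182818^2)*(2*2.7182818*(ρ-1) + 2*2.7182818^2) + (2*2.7182818*(ρ-1) + 2*2.7182818^2)^2)) + 1 - ρ + (2*2.7182818*(ρ-1) + 2*2.7182818^2)/((ρ-1)^2 + 4*2.7182818*(ρ-1) + 2*2.7182818^2) - ρ*((ρ-1)^2 + 4*2.7182818*(ρ-1) + 2*2.7182818^2)/(2*2.7182818*(ρ-1) + 2*2.7182818^2) = (((575720754003894532178888268395108768651747359106716059521:ℝ)/104284286499023437500000000000000000000000000000000000) * (ρ-1)^3 * (5/2-ρ)^8 + ((781950686188406012169462140394282328112823657964791684521:ℝ)/13035535812377929687500000000000000000000000000000000) * (ρ-1)^4 * (5/2-ρ)^7 + ((7344331037091388223519384661896887332680696639947571166647:ℝ)/26071071624755859375000000000000000000000000000000000)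 * (ρ-1)^5 * (5/2-ρ)^6 + ((9724238214367386650093709906179553693671548053829100541647:ℝ)/13035535812377929687500000000000000000000000000000000) * (ρ-1)^6 * (5/2-ρ)^5 + ((12688997316392823054680175850686920327386343284898129916647:ℝ)/10428428649902343750000000000000000000000000000000000) * (ρ-1)^7 * (5/2-ρ)^4 + ((16292695346412820335647444551269618704886605770654659291647:ℝ)/13035535812377929687500000000000000000000000000000000) * (ρ-1)^8 * (5/2-ρ)^3 + ((20545072968423285684435856059073892601921358948598688666647:ℝ)/26071071624755859375000000000000000000000000000000000) * (ρ-1)^9 * (5/2-ρ)^2 + ((3625449949013080392988866430377664125739589465175745434521:ℝ)/13035535812377929687500000000000000000000000000000000) * (ρ-1)^10 * (5/2-ρ)^1 + ((4371259343576227392956754566621519038361133018721321059521:ℝ)/104284286499023437500000000000000000000000000000000000) * (ρ-1)^11) / ((ρ^2+4*ρ+1) * (((ρ-1)^2 + 4*2.7182818*(ρ-1) + 2*2.7182818^2)^2 + 4*((ρ-1)^2 + 4*2.7182818*(ρ-1) + 2*2.7182818^2)*(2*2.7182818*(ρ-1) + 2*2.7182818^2) + (2*2.7182818*(ρ-1)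 + 2*2.7182818^2)^2) * ((ρ-1)^2 + 4*2.7182818*(ρ-1) + 2*2.7182818^2) * (2*2.7182818*(ρ-1) + 2*2.7182818^2)) := by
    rw [eq_div_iff hD.ne']
    field_simp
    ring
  rw [hid]
  exact div_nonneg hC hD.le

lemma keyB (ρ : ℝ) (h1 : 5/2 ≤ ρ) (h2 : ρ ≤ 13/2) :
    0 ≤ (1+ρ)*((0.6931471803 + 3*((ρ/2)^2-1)/((ρ/2)^2+4*(ρ/2)+1)) + 3*(((ρ-1)^2 + 4*2.7182818*(ρ-1) + 2*2.7182818^2)^2-(2*2.7182818*(ρ-1) + 2*2.7182818^2)^2)/(((ρ-1)^2 + 4*2.7182818*(ρ-1) + 2*2.7182818^2)^2 + 4*((ρ-1)^2 + 4*2.7182818*(ρ-1) + 2*2.7182818^2)*(2*2.7182818*(ρ-1) + 2*2.7182818^2) + (2*2.7182818*(ρ-1) + 2*2.7182818^2)^2)) + 1 - ρ + (2*2.7182818*(ρ-1) + 2*2.7182818^2)/((ρ-1)^2 + 4*2.7182818*(ρ-1) + 2*2.7182818^2) - ρ*((ρ-1)^2 + 4*2.7182818*(ρ-1) + 2*2.7182818^2)/(2*2.7182818*(ρ-1)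 + 2*2.7182818^2) := by
  have hNu : (0:ℝ) < ((ρ-1)^2 + 4*2.7182818*(ρ-1) + 2*2.7182818^2) := by nlinarith [sq_nonneg (ρ-1)]
  have hDu : (0:ℝ) < (2*2.7182818*(ρ-1) + 2*2.7182818^2) := by nlinarith
  have hQQ : (0:ℝ) < (((ρ-1)^2 + 4*2.7182818*(ρ-1) + 2*2.7182818^2)^2 + 4*((ρ-1)^2 + 4*2.7182818*(ρ-1) + 2*2.7182818^2)*(2*2.7182818*(ρ-1) + 2*2.7182818^2) + (2*2.7182818*(ρ-1) + 2*2.7182818^2)^2) := by nlinarith [mul_pos hNu hDu, mul_pos hNu hNu, mul_pos hDu hDu]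
  have hB1 : (0:ℝ) < ρ^2+4*ρ+1 := by nlinarith
  have hB1h : (0:ℝ) < (ρ/2)^2+4*(ρ/2)+1 := by nlinarith
  have hD : (0:ℝ) < ((ρ/2)^2+4*(ρ/2)+1) * (((ρ-1)^2 + 4*2.7182818*(ρ-1) + 2*2.7182818^2)^2 + 4*((ρ-1)^2 + 4*2.7182818*(ρ-1) + 2*2.7182818^2)*(2*2.7182818*(ρ-1) + 2*2.7182818^2) + (2*2.7182818*(ρ-1) + 2*2.7182818^2)^2) * ((ρ-1)^2 + 4*2.7182818*(ρ-1) + 2*2.7182818^2) * (2*2.7182818*(ρ-1) + 2*2.7182818^2) := by positivity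
  have hx : (0:ℝ) ≤ ρ-5/2 := by linarith
  have hy : (0:ℝ) ≤ 13/2-ρ := by linarith
  have hC : (0:ℝ) ≤ ((7413227905714741333898630032747398782388352915781937310248981209548383:ℝ)/16384000000000000000000000000000000000000000000000000000000000000000000) * (13/2-ρ)^11 + ((171442598595934328943261413399690540918633497782565659157659712812263949:ℝ)/16384000000000000000000000000000000000000000000000000000000000000000000) * (ρ-5/2)^1 * (13/2-ρ)^10 + ((1752869746160756501942936583133033962682241529706365219951248292314274393:ℝ)/16384000000000000000000000000000000000000000000000000000000000000000000) * (ρ-5/2)^2 * (13/2-ρ)^9 + ((2086996738577167996070625016141078442191689792150923408871097355326865719:ℝ)/3276800000000000000000000000000000000000000000000000000000000000000000) * (ρ-5/2)^3 * (13/2-ρ)^8 + ((20032024532249359054287979925377875692325560773604251505772359519160729051:ℝ)/8192000000000000000000000000000000000000000000000000000000000000000000) * (ρ-5/2)^4 * (13/2-ρ)^7 + ((51845078297137298450265146888760739308310921041855113585391374852561989361:ℝ)/8192000000000000000000000000000000000000000000000000000000000000000000) * (ρ-5/2)^5 * (13/2-ρ)^6 + ((91635985463062219009652114020760176907472352190060113811351295697898121097:ℝ)/8192000000000000000000000000000000000000000000000000000000000000000000)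 * (ρ-5/2)^6 * (13/2-ρ)^5 + ((109284828666141039227636897293852452934212791307646705727041856159571836339:ℝ)/8192000000000000000000000000000000000000000000000000000000000000000000) * (ρ-5/2)^7 * (13/2-ρ)^4 + ((33705273235988962761958499372832802914681933798321208610325849930972070527:ℝ)/3276800000000000000000000000000000000000000000000000000000000000000000) * (ρ-5/2)^8 * (13/2-ρ)^3 + ((76119890405702239979571657248512019828885452498437514904369558903098343937:ℝ)/16384000000000000000000000000000000000000000000000000000000000000000000) * (ρ-5/2)^9 * (13/2-ρ)^2 + ((15545704881843687653478126358670978389801389268862954957003244018766541829:ℝ)/16384000000000000000000000000000000000000000000000000000000000000000000) * (ρ-5/2)^10 * (13/2-ρ)^1 + ((35629480547487837951102844086678491692310882888307913478426792891165931:ℝ)/3276800000000000000000000000000000000000000000000000000000000000000000) * (ρ-5/2)^11 := (add_nonneg (add_nonneg (add_nonneg (add_nonneg (add_nonneg (add_nonneg (add_nonneg (add_nonneg (add_nonneg (add_nonneg (add_nonneg (mul_nonneg (by norm_num : (0:ℝ) ≤ (7413227905714741333898630032747398782388352915781937310248981209548383:ℝ)/16384000000000000000000000000000000000000000000000000000000000000000000)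 (pow_nonneg hy 11)) (mul_nonneg (mul_nonneg (by norm_num : (0:ℝ) ≤ (171442598595934328943261413399690540918633497782565659157659712812263949:ℝ)/16384000000000000000000000000000000000000000000000000000000000000000000) (pow_nonneg hx 1)) (pow_nonneg hy 10))) (mul_nonneg (mul_nonneg (by norm_num : (0:ℝ) ≤ (1752869746160756501942936583133033962682241529706365219951248292314274393:ℝ)/16384000000000000000000000000000000000000000000000000000000000000000000) (pow_nonneg hx 2)) (pow_nonneg hy 9))) (mul_nonneg (mul_nonneg (by norm_num : (0:ℝ) ≤ (2086996738577167996070625016141078442191689792150923408871097355326865719:ℝ)/3276800000000000000000000000000000000000000000000000000000000000000000) (pow_nonneg hx 3)) (pow_nonneg hy 8))) (mul_nonneg (mul_nonneg (by norm_num : (0:ℝ) ≤ (20032024532249359054287979925377875692325560773604251505772359519160729051:ℝ)/8192000000000000000000000000000000000000000000000000000000000000000000) (pow_nonneg hx 4)) (pow_nonneg hy 7))) (mul_nonneg (mul_nonneg (by norm_num : (0:ℝ) ≤ (51845078297137298450265146888760739308310921041855113585391374852561989361:ℝ)/8192000000000000000000000000000000000000000000000000000000000000000000) (pow_nonneg hx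 5)) (pow_nonneg hy 6))) (mul_nonneg (mul_nonneg (by norm_num : (0:ℝ) ≤ (91635985463062219009652114020760176907472352190060113811351295697898121097:ℝ)/8192000000000000000000000000000000000000000000000000000000000000000000) (pow_nonneg hx 6)) (pow_nonneg hy 5))) (mul_nonneg (mul_nonneg (by norm_num : (0:ℝ) ≤ (109284828666141039227636897293852452934212791307646705727041856159571836339:ℝ)/8192000000000000000000000000000000000000000000000000000000000000000000) (pow_nonneg hx 7)) (pow_nonneg hy 4))) (mul_nonneg (mul_nonneg (by norm_num : (0:ℝ) ≤ (33705273235988962761958499372832802914681933798321208610325849930972070527:ℝ)/3276800000000000000000000000000000000000000000000000000000000000000000) (pow_nonneg hx 8)) (pow_nonneg hy 3))) (mul_nonneg (mul_nonneg (by norm_num : (0:ℝ) ≤ (76119890405702239979571657248512019828885452498437514904369558903098343937:ℝ)/16384000000000000000000000000000000000000000000000000000000000000000000) (pow_nonneg hx 9)) (pow_nonneg hy 2))) (mul_nonneg (mul_nonneg (by norm_num : (0:ℝ) ≤ (15545704881843687653478126358670978389801389268862954957003244018766541829:ℝ)/16384000000000000000000000000000000000000000000000000000000000000000000) (pow_nonneg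 hx 10)) (pow_nonneg hy 1))) (mul_nonneg (by norm_num : (0:ℝ) ≤ (35629480547487837951102844086678491692310882888307913478426792891165931:ℝ)/3276800000000000000000000000000000000000000000000000000000000000000000) (pow_nonneg hx 11)))
  have hid : (1+ρ)*((0.6931471803 + 3*((ρ/2)^2-1)/((ρ/2)^2+4*(ρ/2)+1)) + 3*(((ρ-1)^2 + 4*2.7182818*(ρ-1) + 2*2.7182818^2)^2-(2*2.7182818*(ρ-1) + 2*2.7182818^2)^2)/(((ρ-1)^2 + 4*2.7182818*(ρ-1) + 2*2.7182818^2)^2 + 4*((ρ-1)^2 + 4*2.7182818*(ρ-1) + 2*2.7182818^2)*(2*2.7182818*(ρ-1) + 2*2.7182818^2) + (2*2.7182818*(ρ-1) + 2*2.7182818^2)^2)) + 1 - ρ + (2*2.7182818*(ρ-1) + 2*2.7182818^2)/((ρ-1)^2 + 4*2.7182818*(ρ-1) + 2*2.7182818^2) - ρ*((ρ-1)^2 + 4*2.7182818*(ρ-1) + 2*2.7182818^2)/(2*2.7182818*(ρ-1) + 2*2.7182818^2) = (((7413227905714741333898630032747398782388352915781937310248981209548383:ℝ)/16384000000000000000000000000000000000000000000000000000000000000000000)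 * (13/2-ρ)^11 + ((171442598595934328943261413399690540918633497782565659157659712812263949:ℝ)/16384000000000000000000000000000000000000000000000000000000000000000000) * (ρ-5/2)^1 * (13/2-ρ)^10 + ((1752869746160756501942936583133033962682241529706365219951248292314274393:ℝ)/16384000000000000000000000000000000000000000000000000000000000000000000) * (ρ-5/2)^2 * (13/2-ρ)^9 + ((2086996738577167996070625016141078442191689792150923408871097355326865719:ℝ)/3276800000000000000000000000000000000000000000000000000000000000000000) * (ρ-5/2)^3 * (13/2-ρ)^8 + ((20032024532249359054287979925377875692325560773604251505772359519160729051:ℝ)/8192000000000000000000000000000000000000000000000000000000000000000000) * (ρ-5/2)^4 * (13/2-ρ)^7 + ((51845078297137298450265146888760739308310921041855113585391374852561989361:ℝ)/8192000000000000000000000000000000000000000000000000000000000000000000) * (ρ-5/2)^5 * (13/2-ρ)^6 + ((91635985463062219009652114020760176907472352190060113811351295697898121097:ℝ)/8192000000000000000000000000000000000000000000000000000000000000000000) * (ρ-5/2)^6 * (13/2-ρ)^5 + ((109284828666141039227636897293852452934212791307646705727041856159571836339:ℝ)/8192000000000000000000000000000000000000000000000000000000000000000000) * (ρ-5/2)^7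 * (13/2-ρ)^4 + ((33705273235988962761958499372832802914681933798321208610325849930972070527:ℝ)/3276800000000000000000000000000000000000000000000000000000000000000000) * (ρ-5/2)^8 * (13/2-ρ)^3 + ((76119890405702239979571657248512019828885452498437514904369558903098343937:ℝ)/16384000000000000000000000000000000000000000000000000000000000000000000) * (ρ-5/2)^9 * (13/2-ρ)^2 + ((15545704881843687653478126358670978389801389268862954957003244018766541829:ℝ)/16384000000000000000000000000000000000000000000000000000000000000000000) * (ρ-5/2)^10 * (13/2-ρ)^1 + ((35629480547487837951102844086678491692310882888307913478426792891165931:ℝ)/3276800000000000000000000000000000000000000000000000000000000000000000) * (ρ-5/2)^11) / (((ρ/2)^2+4*(ρ/2)+1) * (((ρ-1)^2 + 4*2.7182818*(ρ-1) + 2*2.7182818^2)^2 + 4*((ρ-1)^2 + 4*2.7182818*(ρ-1) + 2*2.7182818^2)*(2*2.7182818*(ρ-1) + 2*2.7182818^2) + (2*2.7182818*(ρ-1) + 2*2.7182818^2)^2) * ((ρ-1)^2 + 4*2.7182818*(ρ-1) + 2*2.7182818^2) * (2*2.7182818*(ρ-1) + 2*2.7182818^2)) := by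
    rw [eq_div_iff hD.ne']
    set Q : ℝ := (((ρ-1)^2 + 4*2.7182818*(ρ-1) + 2*2.7182818^2)^2 + 4*((ρ-1)^2 + 4*2.7182818*(ρ-1) + 2*2.7182818^2)*(2*2.7182818*(ρ-1) + 2*2.7182818^2) + (2*2.7182818*(ρ-1) + 2*2.7182818^2)^2) with hQe
    set N : ℝ := ((ρ-1)^2 + 4*2.7182818*(ρ-1) + 2*2.7182818^2) with hNe
    set Dv : ℝ := (2*2.7182818*(ρ-1) + 2*2.7182818^2) with hDe
    set B : ℝ := ((ρ/2)^2+4*(ρ/2)+1) with hBe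
    have hQ0 : Q ≠ 0 := hQQ.ne'
    have hN0 : N ≠ 0 := hNu.ne'
    have hD0 : Dv ≠ 0 := hDu.ne'
    have hB0 : B ≠ 0 := hB1h.ne'
    field_simp
    simp only [hQe, hNe, hDe, hBe]
    ring
  rw [hid]
  exact div_nonneg hC hD.le

lemma keyC (ρ : ℝ) (h1 : 13/2 ≤ ρ) (h2 : ρ ≤ 92/5) :
    0 ≤ 3*(ρ^2-1)/(ρ^2+4*ρ+1) + (ρ+1)*(3*((1.3862943606*((ρ+1.7182818)^2 + 4*(ρ+1.7182818)*4 + 4^2) + 3*((ρ+1.7182818)^2 - 4^2))^2-((ρ+1.7182818)^2 + 4*(ρ+1.7182818)*4 + 4^2)^2)/((1.3862943606*((ρ+1.7182818)^2 + 4*(ρ+1.7182818)*4 + 4^2) + 3*((ρ+1.7182818)^2 - 4^2))^2 + 4*(1.3862943606*((ρ+1.7182818)^2 + 4*(ρ+1.7182818)*4 + 4^2) + 3*((ρ+1.7182818)^2 - 4^2))*((ρ+1.7182818)^2 + 4*(ρ+1.7182818)*4 + 4^2) + ((ρ+1.7182818)^2 + 4*(ρ+1.7182818)*4 + 4^2)^2))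 - ρ - 0.7182819 := by
  have hDm : (0:ℝ) < ((ρ+1.7182818)^2 + 4*(ρ+1.7182818)*4 + 4^2) := by nlinarith
  have hNm : (0:ℝ) < (1.3862943606*((ρ+1.7182818)^2 + 4*(ρ+1.7182818)*4 + 4^2) + 3*((ρ+1.7182818)^2 - 4^2)) := by nlinarith
  have hQQ : (0:ℝ) < ((1.3862943606*((ρ+1.7182818)^2 + 4*(ρ+1.7182818)*4 + 4^2) + 3*((ρ+1.7182818)^2 - 4^2))^2 + 4*(1.3862943606*((ρ+1.7182818)^2 + 4*(ρ+1.7182818)*4 + 4^2) + 3*((ρ+1.7182818)^2 - 4^2))*((ρ+1.7182818)^2 + 4*(ρ+1.7182818)*4 + 4^2) + ((ρ+1.7182818)^2 + 4*(ρ+1.7182818)*4 + 4^2)^2) := by nlinarith [mul_pos hNm hDm, mul_pos hNm hNm, mul_pos hDm hDm]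
  have hB1 : (0:ℝ) < ρ^2+4*ρ+1 := by nlinarith
  have hD : (0:ℝ) < (ρ^2+4*ρ+1) * ((1.3862943606*((ρ+1.7182818)^2 + 4*(ρ+1.7182818)*4 + 4^2) + 3*((ρ+1.7182818)^2 - 4^2))^2 + 4*(1.3862943606*((ρ+1.7182818)^2 + 4*(ρ+1.7182818)*4 + 4^2) + 3*((ρ+1.7182818)^2 - 4^2))*((ρ+1.7182818)^2 + 4*(ρ+1.7182818)*4 + 4^2) + ((ρ+1.7182818)^2 + 4*(ρ+1.7182818)*4 + 4^2)^2) := by positivity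
  have hx : (0:ℝ) ≤ ρ-13/2 := by linarith
  have hy : (0:ℝ) ≤ 92/5-ρ := by linarith
  have hC : (0:ℝ) ≤ ((568034138496626547471092850849466321111235205232292186999359:ℝ)/3017245908736062500000000000000000000000000000000000000000000) * (92/5-ρ)^7 + ((110301423420608892382198131379817217182563970416895015539127047:ℝ)/15086229543680312500000000000000000000000000000000000000000000) * (ρ-13/2)^1 * (92/5-ρ)^6 + ((2971677240816911535544648435624563661902163599079813238074335561:ℝ)/37715573859200781250000000000000000000000000000000000000000000) * (ρ-13/2)^2 * (92/5-ρ)^5 + ((3060410478980827759112644993660599039317334871465979853019326621:ℝ)/7543114771840156250000000000000000000000000000000000000000000) * (ρ-13/2)^3 * (92/5-ρ)^4 + ((17495671773533953640322509702827326644530189761857625549914923839:ℝ)/15086229543680312500000000000000000000000000000000000000000000) * (ρ-13/2)^4 * (92/5-ρ)^3 + ((28608468295245548076770479135523182862198722244096336812358221299:ℝ)/15086229543680312500000000000000000000000000000000000000000000) * (ρ-13/2)^5 * (92/5-ρ)^2 + ((6290848440468950888394282408577093902559038766626562297416849411:ℝ)/3771557385920078125000000000000000000000000000000000000000000) * (ρ-13/2)^6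 * (92/5-ρ)^1 + ((1654724253568109710882954311837913699663716158317280350323401949:ℝ)/2693969561371484375000000000000000000000000000000000000000000) * (ρ-13/2)^7 := (add_nonneg (add_nonneg (add_nonneg (add_nonneg (add_nonneg (add_nonneg (add_nonneg (mul_nonneg (by norm_num : (0:ℝ) ≤ (568034138496626547471092850849466321111235205232292186999359:ℝ)/3017245908736062500000000000000000000000000000000000000000000) (pow_nonneg hy 7)) (mul_nonneg (mul_nonneg (by norm_num : (0:ℝ) ≤ (110301423420608892382198131379817217182563970416895015539127047:ℝ)/15086229543680312500000000000000000000000000000000000000000000) (pow_nonneg hx 1)) (pow_nonneg hy 6))) (mul_nonneg (mul_nonneg (by norm_num : (0:ℝ) ≤ (2971677240816911535544648435624563661902163599079813238074335561:ℝ)/37715573859200781250000000000000000000000000000000000000000000) (pow_nonneg hx 2)) (pow_nonneg hy 5))) (mul_nonneg (mul_nonneg (by norm_num : (0:ℝ) ≤ (3060410478980827759112644993660599039317334871465979853019326621:ℝ)/7543114771840156250000000000000000000000000000000000000000000) (pow_nonneg hx 3)) (pow_nonneg hy 4))) (mul_nonneg (mul_nonneg (by norm_num : (0:ℝ) ≤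 (17495671773533953640322509702827326644530189761857625549914923839:ℝ)/15086229543680312500000000000000000000000000000000000000000000) (pow_nonneg hx 4)) (pow_nonneg hy 3))) (mul_nonneg (mul_nonneg (by norm_num : (0:ℝ) ≤ (28608468295245548076770479135523182862198722244096336812358221299:ℝ)/15086229543680312500000000000000000000000000000000000000000000) (pow_nonneg hx 5)) (pow_nonneg hy 2))) (mul_nonneg (mul_nonneg (by norm_num : (0:ℝ) ≤ (6290848440468950888394282408577093902559038766626562297416849411:ℝ)/3771557385920078125000000000000000000000000000000000000000000) (pow_nonneg hx 6)) (pow_nonneg hy 1))) (mul_nonneg (by norm_num : (0:ℝ) ≤ (1654724253568109710882954311837913699663716158317280350323401949:ℝ)/2693969561371484375000000000000000000000000000000000000000000) (pow_nonneg hx 7)))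
  have hid : (3*(ρ^2-1)/(ρ^2+4*ρ+1) + (ρ+1)*(3*((1.3862943606*((ρ+1.7182818)^2 + 4*(ρ+1.7182818)*4 + 4^2) + 3*((ρ+1.7182818)^2 - 4^2))^2-((ρ+1.7182818)^2 + 4*(ρ+1.7182818)*4 + 4^2)^2)/((1.3862943606*((ρ+1.7182818)^2 + 4*(ρ+1.7182818)*4 + 4^2) + 3*((ρ+1.7182818)^2 - 4^2))^2 + 4*(1.3862943606*((ρ+1.7182818)^2 + 4*(ρ+1.7182818)*4 + 4^2) + 3*((ρ+1.7182818)^2 - 4^2))*((ρ+1.7182818)^2 + 4*(ρ+1.7182818)*4 + 4^2) + ((ρ+1.7182818)^2 + 4*(ρ+1.7182818)*4 + 4^2)^2)) - ρ - 0.7182819) = (((568034138496626547471092850849466321111235205232292186999359:ℝ)/3017245908736062500000000000000000000000000000000000000000000) * (92/5-ρ)^7 + ((110301423420608892382198131379817217182563970416895015539127047:ℝ)/15086229543680312500000000000000000000000000000000000000000000) * (ρ-13/2)^1 * (92/5-ρ)^6 + ((2971677240816911535544648435624563661902163599079813238074335561:ℝ)/37715573859200781250000000000000000000000000000000000000000000)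 * (ρ-13/2)^2 * (92/5-ρ)^5 + ((3060410478980827759112644993660599039317334871465979853019326621:ℝ)/7543114771840156250000000000000000000000000000000000000000000) * (ρ-13/2)^3 * (92/5-ρ)^4 + ((17495671773533953640322509702827326644530189761857625549914923839:ℝ)/15086229543680312500000000000000000000000000000000000000000000) * (ρ-13/2)^4 * (92/5-ρ)^3 + ((28608468295245548076770479135523182862198722244096336812358221299:ℝ)/15086229543680312500000000000000000000000000000000000000000000) * (ρ-13/2)^5 * (92/5-ρ)^2 + ((6290848440468950888394282408577093902559038766626562297416849411:ℝ)/3771557385920078125000000000000000000000000000000000000000000) * (ρ-13/2)^6 * (92/5-ρ)^1 + ((1654724253568109710882954311837913699663716158317280350323401949:ℝ)/2693969561371484375000000000000000000000000000000000000000000) * (ρ-13/2)^7) / ((ρ^2+4*ρ+1) * ((1.3862943606*((ρ+1.7182818)^2 + 4*(ρ+1.7182818)*4 + 4^2) + 3*((ρ+1.7182818)^2 - 4^2))^2 + 4*(1.3862943606*((ρ+1.7182818)^2 + 4*(ρ+1.7182818)*4 + 4^2) + 3*((ρ+1.7182818)^2 - 4^2))*((ρ+1.7182818)^2 + 4*(ρ+1.7182818)*4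 + 4^2) + ((ρ+1.7182818)^2 + 4*(ρ+1.7182818)*4 + 4^2)^2)) := by
    rw [eq_div_iff hD.ne']
    set Q : ℝ := ((1.3862943606*((ρ+1.7182818)^2 + 4*(ρ+1.7182818)*4 + 4^2) + 3*((ρ+1.7182818)^2 - 4^2))^2 + 4*(1.3862943606*((ρ+1.7182818)^2 + 4*(ρ+1.7182818)*4 + 4^2) + 3*((ρ+1.7182818)^2 - 4^2))*((ρ+1.7182818)^2 + 4*(ρ+1.7182818)*4 + 4^2) + ((ρ+1.7182818)^2 + 4*(ρ+1.7182818)*4 + 4^2)^2) with hQe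
    set Nm : ℝ := (1.3862943606*((ρ+1.7182818)^2 + 4*(ρ+1.7182818)*4 + 4^2) + 3*((ρ+1.7182818)^2 - 4^2)) with hNe
    set Dm : ℝ := ((ρ+1.7182818)^2 + 4*(ρ+1.7182818)*4 + 4^2) with hDe
    set B : ℝ := (ρ^2+4*ρ+1) with hBe
    have hQ0 : Q ≠ 0 := hQQ.ne'
    have hN0 : Nm ≠ 0 := hNm.ne'
    have hD0 : Dm ≠ 0 := hDm.ne'
    have hB0 : B ≠ 0 := hB1.ne'
    field_simp
    simp only [hQe, hNe, hDe, hBe]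
    ring
  rw [hid]
  exact div_nonneg hC hD.le


/-- l(ρ) ≥ 0 for all ρ ≥ 1. -/
theorem l_nonneg (ρ : ℝ) (hρ : 1 ≤ ρ) :
    (ρ + 1) * (Real.log ρ + Real.log (Real.log (ρ + (Real.exp 1 - 1))))
      - ρ * (Real.log (ρ + (Real.exp 1 - 1)) + 1)
      + (Real.log (ρ + (Real.exp 1 - 1)))⁻¹ + 1 ≥ 0 := by
  rw [ge_iff_le,
    show (Real.log (ρ + (Real.exp 1 - 1)))⁻¹ = 1/(Real.log (ρ + (Real.exp 1 - 1))) from (one_div _).symm]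
  have hE1 : (2.7182818:ℝ) < Real.exp 1 := by linarith [Real.exp_one_gt_d9]
  have hE2 : Real.exp 1 < 2.7182819 := by linarith [Real.exp_one_lt_d9]
  have hA0 : (0:ℝ) < ρ + (Real.exp 1 - 1) := by linarith
  have hL1 : 1 ≤ Real.log (ρ + (Real.exp 1 - 1)) := by
    have h1 : Real.exp 1 ≤ ρ + (Real.exp 1 - 1) := by linarith
    have h2 := Real.log_le_log (Real.exp_pos 1) h1
    rwa [Real.log_exp] at h2
  have hL0 : (0:ℝ) < Real.log (ρ + (Real.exp 1 - 1)) := by linarith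
  rcases le_or_gt ρ (13/2) with hsp | hsp
  · -- regions A and B : 1 ≤ ρ ≤ 13/2
    have hNu : (0:ℝ) < ((ρ-1)^2 + 4*2.7182818*(ρ-1) + 2*2.7182818^2) := by nlinarith [sq_nonneg (ρ-1)]
    have hDu : (0:ℝ) < (2*2.7182818*(ρ-1) + 2*2.7182818^2) := by nlinarith
    have hu1 : (1:ℝ) ≤ ((ρ-1)^2 + 4*2.7182818*(ρ-1) + 2*2.7182818^2)/(2*2.7182818*(ρ-1) + 2*2.7182818^2) := by
      rw [le_div_iff₀ hDu]; nlinarith [sq_nonneg (ρ-1)]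
    have hLu : Real.log (ρ + (Real.exp 1 - 1)) ≤ ((ρ-1)^2 + 4*2.7182818*(ρ-1) + 2*2.7182818^2)/(2*2.7182818*(ρ-1) + 2*2.7182818^2) := by
      have hy0 : (0:ℝ) < (1 + (ρ-1)/2.7182818) := by
        have h := div_nonneg (show (0:ℝ) ≤ ρ-1 by linarith) (show (0:ℝ) ≤ (2.7182818:ℝ) by norm_num)
        linarith
      have hw0 : (0:ℝ) < 1 + (ρ-1)/Real.exp 1 := by
        have h := div_nonneg (show (0:ℝ) ≤ ρ-1 by linarith) (Real.exp_pos 1).le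
        linarith
      have hsplit : ρ + (Real.exp 1 - 1) = Real.exp 1 * (1 + (ρ-1)/Real.exp 1) := by
        field_simp
        ring
      have hlogeq : Real.log (ρ + (Real.exp 1 - 1)) = 1 + Real.log (1 + (ρ-1)/Real.exp 1) := by
        rw [hsplit, Real.log_mul (Real.exp_ne_zero 1) hw0.ne', Real.log_exp]
      have hW0 : (0:ℝ) < ρ - 1 + 2.7182818 := by linarith
      have htd := trap_div (ρ - 1 + 2.7182818) 2.7182818 (by norm_num) (by linarith)
      have hwc : (ρ - 1 + 2.7182818)/2.7182818 = 1 + (ρ-1)/2.7182818 := by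
        rw [add_div]
        norm_num
        ring
      have hdd : (ρ-1)/Real.exp 1 ≤ (ρ-1)/2.7182818 := by
        rw [div_le_div_iff₀ (Real.exp_pos 1) (by norm_num : (0:ℝ) < 2.7182818)]
        nlinarith [mul_nonneg (sub_nonneg.2 hρ) (sub_nonneg.2 hE1.le)]
      have hmono : Real.log (1 + (ρ-1)/Real.exp 1) ≤ Real.log ((ρ - 1 + 2.7182818)/2.7182818) := by
        rw [hwc]
        exact Real.log_le_log hw0 (by linarith)
      have hY2 : (0:ℝ) < 2*(ρ - 1 + 2.7182818)*2.7182818 := by nlinarith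
      have hflat : 1 + ((ρ - 1 + 2.7182818)^2 - 2.7182818^2)/(2*(ρ - 1 + 2.7182818)*2.7182818) = ((ρ-1)^2 + 4*2.7182818*(ρ-1) + 2*2.7182818^2)/(2*2.7182818*(ρ-1) + 2*2.7182818^2) := by
        rw [eq_div_iff hDu.ne']
        field_simp
        ring
      linarith [hlogeq, hmono, htd, hflat]
    have hQQ : (0:ℝ) < (((ρ-1)^2 + 4*2.7182818*(ρ-1) + 2*2.7182818^2)^2 + 4*((ρ-1)^2 + 4*2.7182818*(ρ-1) + 2*2.7182818^2)*(2*2.7182818*(ρ-1) + 2*2.7182818^2) + (2*2.7182818*(ρ-1) + 2*2.7182818^2)^2) := by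
      nlinarith [mul_pos hNu hDu, mul_pos hNu hNu, mul_pos hDu hDu]
    have hcomp : (0:ℝ) < (((ρ-1)^2 + 4*2.7182818*(ρ-1) + 2*2.7182818^2)/(2*2.7182818*(ρ-1) + 2*2.7182818^2))^2 + 4*(((ρ-1)^2 + 4*2.7182818*(ρ-1) + 2*2.7182818^2)/(2*2.7182818*(ρ-1) + 2*2.7182818^2)) + 1 := by
      have h := div_pos hNu hDu
      nlinarith [sq_nonneg (((ρ-1)^2 + 4*2.7182818*(ρ-1) + 2*2.7182818^2)/(2*2.7182818*(ρ-1) + 2*2.7182818^2))]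
    have e1 : 3*((((ρ-1)^2 + 4*2.7182818*(ρ-1) + 2*2.7182818^2)/(2*2.7182818*(ρ-1) + 2*2.7182818^2))^2 - 1)/((((ρ-1)^2 + 4*2.7182818*(ρ-1) + 2*2.7182818^2)/(2*2.7182818*(ρ-1) + 2*2.7182818^2))^2 + 4*(((ρ-1)^2 + 4*2.7182818*(ρ-1) + 2*2.7182818^2)/(2*2.7182818*(ρ-1) + 2*2.7182818^2)) + 1)
        = 3*(((ρ-1)^2 + 4*2.7182818*(ρ-1) + 2*2.7182818^2)^2 - (2*2.7182818*(ρ-1) + 2*2.7182818^2)^2)/(((ρ-1)^2 + 4*2.7182818*(ρ-1) + 2*2.7182818^2)^2 + 4*((ρ-1)^2 + 4*2.7182818*(ρ-1) + 2*2.7182818^2)*(2*2.7182818*(ρ-1) + 2*2.7182818^2) + (2*2.7182818*(ρ-1) + 2*2.7182818^2)^2) := by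
      rw [div_eq_div_iff hcomp.ne' hQQ.ne']
      set Q : ℝ := (((ρ-1)^2 + 4*2.7182818*(ρ-1) + 2*2.7182818^2)^2 + 4*((ρ-1)^2 + 4*2.7182818*(ρ-1) + 2*2.7182818^2)*(2*2.7182818*(ρ-1) + 2*2.7182818^2) + (2*2.7182818*(ρ-1) + 2*2.7182818^2)^2) with hQe
      set N : ℝ := ((ρ-1)^2 + 4*2.7182818*(ρ-1) + 2*2.7182818^2) with hNe
      set Dv : ℝ := (2*2.7182818*(ρ-1) + 2*2.7182818^2) with hDe
      have hN0 : N ≠ 0 := hNu.ne'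
      have hD0 : Dv ≠ 0 := hDu.ne'
      field_simp
      simp only [hQe, hNe, hDe]
      ring
    have e2 : 1/(((ρ-1)^2 + 4*2.7182818*(ρ-1) + 2*2.7182818^2)/(2*2.7182818*(ρ-1) + 2*2.7182818^2)) = (2*2.7182818*(ρ-1) + 2*2.7182818^2)/((ρ-1)^2 + 4*2.7182818*(ρ-1) + 2*2.7182818^2) := one_div_div _ _
    have e3 : ρ*(((ρ-1)^2 + 4*2.7182818*(ρ-1) + 2*2.7182818^2)/(2*2.7182818*(ρ-1) + 2*2.7182818^2)) = ρ*((ρ-1)^2 + 4*2.7182818*(ρ-1) + 2*2.7182818^2)/(2*2.7182818*(ρ-1) + 2*2.7182818^2) := by ring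
    rcases le_or_gt ρ (5/2) with hr | hr
    · -- region A
      have hp1 : (3*(ρ^2-1)/(ρ^2+4*ρ+1)) ≤ Real.log ρ := pade_lower ρ hρ
      have hkey : 0 ≤ (1+ρ)*((3*(ρ^2-1)/(ρ^2+4*ρ+1)) + 3*((((ρ-1)^2 + 4*2.7182818*(ρ-1) + 2*2.7182818^2)/(2*2.7182818*(ρ-1) + 2*2.7182818^2))^2-1)/((((ρ-1)^2 + 4*2.7182818*(ρ-1) + 2*2.7182818^2)/(2*2.7182818*(ρ-1) + 2*2.7182818^2))^2+4*(((ρ-1)^2 + 4*2.7182818*(ρ-1) + 2*2.7182818^2)/(2*2.7182818*(ρ-1) + 2*2.7182818^2))+1))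
          + 1 - ρ + 1/(((ρ-1)^2 + 4*2.7182818*(ρ-1) + 2*2.7182818^2)/(2*2.7182818*(ρ-1) + 2*2.7182818^2)) - ρ*(((ρ-1)^2 + 4*2.7182818*(ρ-1) + 2*2.7182818^2)/(2*2.7182818*(ρ-1) + 2*2.7182818^2)) := by
        rw [e1, e2, e3]
        exact keyA ρ hρ hr
      linarith [reduce ρ (Real.log (ρ + (Real.exp 1 - 1))) (((ρ-1)^2 + 4*2.7182818*(ρ-1) + 2*2.7182818^2)/(2*2.7182818*(ρ-1) + 2*2.7182818^2)) (3*(ρ^2-1)/(ρ^2+4*ρ+1)) hρ hL1 hLu hp1 hkey]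
    · -- region B
      have hρ2 : (0:ℝ) < ρ/2 := by linarith
      have hsplitρ : Real.log ρ = Real.log 2 + Real.log (ρ/2) := by
        conv_lhs => rw [show ρ = 2*(ρ/2) by ring]
        rw [Real.log_mul (by norm_num) hρ2.ne']
      have hpade2 := pade_lower (ρ/2) (by linarith)
      have hp1 : (0.6931471803 + 3*((ρ/2)^2-1)/((ρ/2)^2+4*(ρ/2)+1)) ≤ Real.log ρ := by
        linarith [Real.log_two_gt_d9, hpade2, hsplitρ]
      have hkey : 0 ≤ (1+ρ)*((0.6931471803 + 3*((ρ/2)^2-1)/((ρ/2)^2+4*(ρ/2)+1)) + 3*((((ρ-1)^2 + 4*2.7182818*(ρ-1) + 2*2.7182818^2)/(2*2.7182818*(ρ-1) + 2*2.7182818^2))^2-1)/((((ρ-1)^2 + 4*2.7182818*(ρ-1) + 2*2.7182818^2)/(2*2.7182818*(ρ-1) + 2*2.7182818^2))^2+4*(((ρ-1)^2 + 4*2.7182818*(ρ-1) + 2*2.7182818^2)/(2*2.7182818*(ρ-1) + 2*2.7182818^2))+1))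
          + 1 - ρ + 1/(((ρ-1)^2 + 4*2.7182818*(ρ-1) + 2*2.7182818^2)/(2*2.7182818*(ρ-1) + 2*2.7182818^2)) - ρ*(((ρ-1)^2 + 4*2.7182818*(ρ-1) + 2*2.7182818^2)/(2*2.7182818*(ρ-1) + 2*2.7182818^2)) := by
        rw [e1, e2, e3]
        exact keyB ρ (by linarith) hsp
      linarith [reduce ρ (Real.log (ρ + (Real.exp 1 - 1))) (((ρ-1)^2 + 4*2.7182818*(ρ-1) + 2*2.7182818^2)/(2*2.7182818*(ρ-1) + 2*2.7182818^2)) (0.6931471803 + 3*((ρ/2)^2-1)/((ρ/2)^2+4*(ρ/2)+1)) hρ hL1 hLu hp1 hkey]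
  · -- regions C and D : ρ > 13/2
    have hρ0 : (0:ℝ) < ρ := by linarith
    have hq : (0:ℝ) < (ρ + (Real.exp 1 - 1))/ρ := div_pos hA0 hρ0
    have hub := Real.log_le_sub_one_of_pos hq
    rw [Real.log_div hA0.ne' hρ0.ne'] at hub
    have hub2 := mul_le_mul_of_nonneg_left hub hρ0.le
    have hub3 : ρ * ((ρ + (Real.exp 1 - 1))/ρ) = ρ + (Real.exp 1 - 1) := by
      field_simp
    have hub4 : ρ * Real.log (ρ + (Real.exp 1 - 1)) ≤ ρ * Real.log ρ + (Real.exp 1 - 1) := by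
      nlinarith [hub2, hub3]
    have hinvL : (0:ℝ) < 1/(Real.log (ρ + (Real.exp 1 - 1))) := by positivity
    rcases le_or_gt ρ (92/5) with hr | hr
    · -- region C
      have hp1 : 3*(ρ^2-1)/(ρ^2+4*ρ+1) ≤ Real.log ρ := pade_lower ρ hρ
      have hBz4 : (4:ℝ) ≤ ρ + 1.7182818 := by linarith
      have hBz0 : (0:ℝ) < ρ + 1.7182818 := by linarith
      have hDm : (0:ℝ) < ((ρ+1.7182818)^2 + 4*(ρ+1.7182818)*4 + 4^2) := by nlinarith
      have hNm : (0:ℝ) < (1.3862943606*((ρ+1.7182818)^2 + 4*(ρ+1.7182818)*4 + 4^2) + 3*((ρ+1.7182818)^2 - 4^2)) := by nlinarith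
      have hpd := pade_div (ρ + 1.7182818) 4 (by norm_num) hBz4
      have hz4 : (0:ℝ) < (ρ + 1.7182818)/4 := by linarith
      have hls : Real.log (ρ + 1.7182818)
          = Real.log 2 + (Real.log 2 + Real.log ((ρ + 1.7182818)/4)) := by
        conv_lhs => rw [show ρ + 1.7182818 = 2*(2*((ρ + 1.7182818)/4)) by ring]
        rw [Real.log_mul (by norm_num) (mul_pos two_pos hz4).ne', Real.log_mul (by norm_num) hz4.ne']
      have hmono : Real.log (ρ + 1.7182818) ≤ Real.log (ρ + (Real.exp 1 - 1)) :=
        Real.log_le_log hBz0 (by linarith)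
      have hflat : (1.3862943606*((ρ+1.7182818)^2 + 4*(ρ+1.7182818)*4 + 4^2) + 3*((ρ+1.7182818)^2 - 4^2))/((ρ+1.7182818)^2 + 4*(ρ+1.7182818)*4 + 4^2)
          = 1.3862943606 + 3*((ρ + 1.7182818)^2 - 4^2)/((ρ + 1.7182818)^2 + 4*(ρ + 1.7182818)*4 + 4^2) := by
        field_simp
      have hMle : (1.3862943606*((ρ+1.7182818)^2 + 4*(ρ+1.7182818)*4 + 4^2) + 3*((ρ+1.7182818)^2 - 4^2))/((ρ+1.7182818)^2 + 4*(ρ+1.7182818)*4 + 4^2) ≤ Real.log (ρ + (Real.exp 1 - 1)) := by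
        linarith [hpd, hls, hmono, hflat, Real.log_two_gt_d9]
      have hMpos : (0:ℝ) < (1.3862943606*((ρ+1.7182818)^2 + 4*(ρ+1.7182818)*4 + 4^2) + 3*((ρ+1.7182818)^2 - 4^2))/((ρ+1.7182818)^2 + 4*(ρ+1.7182818)*4 + 4^2) := div_pos hNm hDm
      have hM1 : ((ρ+1.7182818)^2 + 4*(ρ+1.7182818)*4 + 4^2) ≤ (1.3862943606*((ρ+1.7182818)^2 + 4*(ρ+1.7182818)*4 + 4^2) + 3*((ρ+1.7182818)^2 - 4^2)) := by nlinarith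
      have hpdM := pade_div (1.3862943606*((ρ+1.7182818)^2 + 4*(ρ+1.7182818)*4 + 4^2) + 3*((ρ+1.7182818)^2 - 4^2)) ((ρ+1.7182818)^2 + 4*(ρ+1.7182818)*4 + 4^2) hDm hM1
      have hlogL : 3*((1.3862943606*((ρ+1.7182818)^2 + 4*(ρ+1.7182818)*4 + 4^2) + 3*((ρ+1.7182818)^2 - 4^2))^2-((ρ+1.7182818)^2 + 4*(ρ+1.7182818)*4 + 4^2)^2)/((1.3862943606*((ρ+1.7182818)^2 + 4*(ρ+1.7182818)*4 + 4^2) + 3*((ρ+1.7182818)^2 - 4^2))^2 + 4*(1.3862943606*((ρ+1.7182818)^2 + 4*(ρ+1.7182818)*4 + 4^2) + 3*((ρ+1.7182818)^2 - 4^2))*((ρ+1.7182818)^2 + 4*(ρ+1.7182818)*4 + 4^2) + ((ρ+1.7182818)^2 + 4*(ρ+1.7182818)*4 + 4^2)^2) ≤ Real.log (Real.log (ρ + (Real.exp 1 - 1))) :=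
        le_trans hpdM (Real.log_le_log hMpos hMle)
      have t2 := mul_le_mul_of_nonneg_left hlogL (show (0:ℝ) ≤ ρ+1 by linarith)
      have hk := keyC ρ (by linarith) hr
      linarith [hp1, t2, hk, hub4, hinvL, hE2]
    · -- region D
      have hcube : Real.exp 1 ^ (3:ℕ) ≤ ρ + (Real.exp 1 - 1) := by
        have h3 : Real.exp 1 ^ (3:ℕ) ≤ (2.7182819:ℝ)^(3:ℕ) :=
          pow_le_pow_left₀ (Real.exp_pos 1).le hE2.le 3
        nlinarith [h3]
      have hL3 : (3:ℝ) ≤ Real.log (ρ + (Real.exp 1 - 1)) := by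
        rw [Real.le_log_iff_exp_le hA0]
        calc Real.exp 3 = Real.exp 1 ^ (3:ℕ) := by
              rw [Real.exp_one_pow]; norm_num
          _ ≤ ρ + (Real.exp 1 - 1) := hcube
      have h1L : (1:ℝ) ≤ Real.log (Real.log (ρ + (Real.exp 1 - 1))) := by
        rw [Real.le_log_iff_exp_le hL0]
        calc Real.exp 1 ≤ 2.7182819 := hE2.le
          _ ≤ Real.log (ρ + (Real.exp 1 - 1)) := by linarith
      have t2 := mul_le_mul_of_nonneg_left h1L (show (0:ℝ) ≤ ρ+1 by linarith)
      have hlρ : (0:ℝ) ≤ Real.log ρ := Real.log_nonneg hρ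
      have hρlρ : (0:ℝ) ≤ ρ * Real.log ρ := mul_nonneg hρ0.le hlρ
      linarith [t2, hlρ, hρlρ, hub4, hinvL, hE2]
end
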